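/- arXiv:1211.5394 — 2 statements merged into one kernel-verified Lean document; each statement's English description precedes it below -/
import Mathlib

section
/- Let (W,S) be any Coxeter system with an S-preserving involution *. If y,w ∈ I_* and s ∈ Des_L(y) \ Des_L(w), then the integer μ^σ(y,w;s) is nonzero only if ℓ(w) − ℓ(y) is even and y < s⋉w in the Bruhat order. -/
open Polynomial LaurentPolynomial
open scoped Classical

noncomputable section

namespace TwistedKL

/-- The ring `𝒜 = ℤ[v,v⁻¹]` of Laurent polynomials over `ℤ`. -/
abbrev A𝕃 : Type := LaurentPolynomial ℤ

/-- The element `v ∈ 𝒜`. -/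
def vv : A𝕃 := LaurentPolynomial.T 1

/-- The element `q = v² ∈ 𝒜`. -/
def qq : A𝕃 := LaurentPolynomial.T 2

variable {B : Type} {W : Type} [Group W] {M : CoxeterMatrix B}

/-- The Bruhat order on a Coxeter group, via the subword property: `y ≤ w` iff every
reduced word for `w` has a subword whose product is `y`. -/
def BruhatLE (cs : CoxeterSystem M W) (y w : W) : Prop :=
  ∀ ω : List B, cs.IsReduced ω → cs.wordProd ω = w →
    ∃ ω' : List B, ω'.Sublist ω ∧ cs.wordProd ω' = y

/-- The strict Bruhat order. -/
def BruhatLT (cs : CoxeterSystem M W) (y w : W) : Prop :=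
  BruhatLE cs y w ∧ y ≠ w

/-- A Coxeter system is universal if the product of any two distinct simple generators has
infinite order. -/
def IsUniversal (cs : CoxeterSystem M W) : Prop :=
  ∀ i j : B, cs.simple i ≠ cs.simple j → ∀ n : ℕ, 0 < n → (cs.simple i * cs.simple j) ^ n ≠ 1

/-- An `S`-preserving involution `* : W → W` (group automorphism of order at most 2
mapping simple reflections to simple reflections). -/
structure StarInv (cs : CoxeterSystem M W) where
  star : W →* W
  invol : ∀ w : W, star (star w) = w
  star_simple : ∀ i : B, ∃ j : B, star (cs.simple i) = cs.simple j

variable {cs : CoxeterSystem M W}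

/-- The set `I_* = {w ∈ W : w* = w⁻¹}` of twisted involutions. -/
def StarInv.I (σ : StarInv cs) : Set W := {w : W | σ.star w = w⁻¹}

lemma StarInv.one_mem (σ : StarInv cs) : (1 : W) ∈ σ.I := by
  simp [StarInv.I]

lemma StarInv.star_mul_self (σ : StarInv cs) (i : B) :
    σ.star (cs.simple i) * σ.star (cs.simple i) = 1 := by
  rw [← map_mul, cs.simple_mul_simple_self, map_one]

lemma StarInv.star_simple_inv (σ : StarInv cs) (i : B) :
    (σ.star (cs.simple i))⁻¹ = σ.star (cs.simple i) :=
  inv_eq_of_mul_eq_one_right (σ.star_mul_self i)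

/-- Conjugation `w ↦ s w s*` preserves `I_*`. -/
lemma StarInv.conj_mem (σ : StarInv cs) (i : B) {w : W} (hw : w ∈ σ.I) :
    cs.simple i * w * σ.star (cs.simple i) ∈ σ.I := by
  have hw' : σ.star w = w⁻¹ := hw
  show σ.star _ = _
  rw [map_mul, map_mul, σ.invol, hw', mul_inv_rev, mul_inv_rev,
    σ.star_simple_inv, cs.inv_simple, mul_assoc]

/-- The twisting operation `s ⋉ w` on twisted involutions. -/
def StarInv.tw (σ : StarInv cs) (s w : W) : W :=
  if s * w = w * σ.star s then s * w else s * w * σ.star s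

/-- `s ⋉ w ∈ I_*` whenever `w ∈ I_*`. -/
lemma StarInv.tw_mem (σ : StarInv cs) (i : B) {w : W} (hw : w ∈ σ.I) :
    σ.tw (cs.simple i) w ∈ σ.I := by
  have hw' : σ.star w = w⁻¹ := hw
  unfold StarInv.tw
  split_ifs with h
  · show σ.star _ = _
    rw [map_mul, hw', mul_inv_rev, cs.inv_simple]
    have h2 : σ.star (cs.simple i) = w⁻¹ * (cs.simple i * w) := by
      rw [h]; group
    rw [h2]; group
  · exact σ.conj_mem i hw

/-- Iterated twisting along a word. -/
def twistWord (cs : CoxeterSystem M W) (σ : StarInv cs) (ω : List B) (w : W) : W :=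
  ω.foldr (fun i x => σ.tw (cs.simple i) x) w

lemma twistWord_mem (σ : StarInv cs) (ω : List B) {w : W} (hw : w ∈ σ.I) :
    twistWord cs σ ω w ∈ σ.I := by
  induction ω with
  | nil => exact hw
  | cons i ω ih => exact σ.tw_mem i ih

/-- In a universal Coxeter system the twisting operation extends to an action of `W`; here we
realize `x ⋉ w` by twisting along a (the) reduced word of `x`. -/
def twAct (cs : CoxeterSystem M W) (σ : StarInv cs) (x w : W) : W :=
  twistWord cs σ (Classical.choose (cs.exists_reduced_word' x)) w

lemma twAct_mem (σ : StarInv cs) (x : W) {w : W} (hw : w ∈ σ.I) :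
    twAct cs σ x w ∈ σ.I :=
  twistWord_mem σ _ hw

lemma StarInv.mul_star_inv_mem (σ : StarInv cs) (u : W) : u * (σ.star u)⁻¹ ∈ σ.I := by
  show σ.star _ = _
  rw [map_mul, map_inv, σ.invol, mul_inv_rev, inv_inv]

lemma StarInv.star_mul_inv_mem (σ : StarInv cs) (y : W) : σ.star y * y⁻¹ ∈ σ.I := by
  show σ.star _ = _
  rw [map_mul, map_inv, σ.invol, mul_inv_rev, inv_inv]

lemma StarInv.simple_mem_I (σ : StarInv cs) (i : B) (h : σ.star (cs.simple i) = cs.simple i) :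
    cs.simple i ∈ σ.I := by
  show σ.star _ = _
  rw [h, cs.inv_simple]

/-- The set of left descents of `w`, as a subset of the simple reflections. -/
def DesL (cs : CoxeterSystem M W) (w : W) : Set W :=
  {t : W | (∃ i : B, t = cs.simple i) ∧ cs.length (t * w) < cs.length w}

/-- The set of right descents of `w`, as a subset of the simple reflections. -/
def DesR (cs : CoxeterSystem M W) (w : W) : Set W :=
  {t : W | (∃ i : B, t = cs.simple i) ∧ cs.length (w * t) < cs.length w}

/-- The alternating word `⋯ r s r s` of length `n` ending with `s`. -/
def altEnd (s r : B) : ℕ → List B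
  | 0 => []
  | n + 1 => altEnd r s n ++ [s]

/-- The alternating word `s r s r ⋯` of length `n` starting with `s`. -/
def altStart (s r : B) : ℕ → List B
  | 0 => []
  | n + 1 => s :: altStart r s n

/-- A word is a reduced `I_*`-expression (for the element `twistWord cs σ ω 1`) if it has
minimal length among all words twisting `1` to that element. -/
def IsTwistReduced (cs : CoxeterSystem M W) (σ : StarInv cs) (ω : List B) : Prop :=
  ∀ ω' : List B, twistWord cs σ ω' 1 = twistWord cs σ ω 1 → ω.length ≤ ω'.length

/-- The map `v ↦ v²` on `ℤ[v,v⁻¹]`. -/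
def sub2 : A𝕃 →+* A𝕃 :=
  AddMonoidAlgebra.mapDomainRingHom ℤ (AddMonoidHom.mk' (fun n : ℤ => 2 * n) (by intros; ring))

/-- The generic Hecke algebra of `(W,S)` with parameter `u`: a free `𝒜`-module with basis
`(t_w)` indexed by `W`, satisfying the quadratic multiplication rule. -/
structure Hecke (cs : CoxeterSystem M W) (u : A𝕃) where
  carrier : Type
  [ring : Ring carrier]
  [alg : Algebra A𝕃 carrier]
  t : Module.Basis W A𝕃 carrier
  t_one : t 1 = 1
  t_mul_up : ∀ (i : B) (w : W), cs.length (cs.simple i * w) = cs.length w + 1 →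
      t (cs.simple i) * t w = t (cs.simple i * w)
  t_mul_down : ∀ (i : B) (w : W), cs.length (cs.simple i * w) + 1 = cs.length w →
      t (cs.simple i) * t w = u • t (cs.simple i * w) + (u - 1) • t w

attribute [instance] Hecke.ring Hecke.alg

/-- A Hecke algebra together with its bar involution. -/
structure HeckeBar (cs : CoxeterSystem M W) (u : A𝕃) extends Hecke cs u where
  bar : carrier →+* carrier
  bar_invol : ∀ h : carrier, bar (bar h) = h
  bar_T : ∀ n : ℤ, bar (algebraMap A𝕃 carrier (LaurentPolynomial.T n)) =
      algebraMap A𝕃 carrier (LaurentPolynomial.T (-n))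
  bar_t_mul : ∀ w : W, bar (t w) * t w⁻¹ = 1
  t_mul_bar : ∀ w : W, t w⁻¹ * bar (t w) = 1

/-- The Hecke algebra `ℋ_q` with parameter `q`, together with its Kazhdan–Lusztig
polynomials and Kazhdan–Lusztig basis. -/
structure KLData (cs : CoxeterSystem M W) extends HeckeBar cs qq where
  P : W → W → Polynomial ℤ
  P_diag : ∀ w : W, P w w = 1
  P_zero : ∀ y w : W, ¬ BruhatLT cs y w → y ≠ w → P y w = 0
  P_deg : ∀ y w : W, BruhatLT cs y w →
      2 * (P y w).natDegree + 1 ≤ cs.length w - cs.length y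
  c : Module.Basis W A𝕃 carrier
  c_repr : ∀ w y : W, t.repr (c w) y =
      LaurentPolynomial.T (-(cs.length w : ℤ)) * Polynomial.aeval qq (P y w)
  c_bar : ∀ w : W, bar (c w) = c w

/-- Structure constants `h_{x,y;z}` of `ℋ_q` in the Kazhdan–Lusztig basis. -/
def KLData.h (K : KLData cs) (x y z : W) : A𝕃 := K.c.repr (K.c x * K.c y) z

/-- Structure constants `h̃_{x,y;z}` defined by `c_x c_y c_{(x*)⁻¹} = Σ_z h̃_{x,y;z} c_z`. -/
def KLData.htilde (K : KLData cs) (σ : StarInv cs) (x y z : W) : A𝕃 :=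
  K.c.repr (K.c x * K.c y * K.c ((σ.star x)⁻¹)) z

/-- The Kazhdan–Lusztig basis `C_w` of the Hecke algebra `ℋ_{q²}` with parameter `q²`. -/
structure C2Data (cs : CoxeterSystem M W) (K : HeckeBar cs (qq ^ 2))
    (P : W → W → Polynomial ℤ) where
  C : Module.Basis W A𝕃 K.carrier
  C_repr : ∀ w y : W, K.t.repr (C w) y =
      LaurentPolynomial.T (-(2 * cs.length w : ℤ)) * Polynomial.aeval (qq ^ 2) (P y w)
  C_bar : ∀ w : W, K.bar (C w) = C w

/-- The Lusztig–Vogan module `M_{q²}` of the Hecke algebra `ℋ_{q²}`, spanned by the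
twisted involutions, with its defining `T_s`-action. -/
structure LVMod (cs : CoxeterSystem M W) (σ : StarInv cs) (K : Hecke cs (qq ^ 2)) where
  Mod : Type
  [addCommGroup : AddCommGroup Mod]
  [modA : Module A𝕃 Mod]
  [modH : Module K.carrier Mod]
  [tower : IsScalarTower A𝕃 K.carrier Mod]
  a : Module.Basis σ.I A𝕃 Mod
  smul₁ : ∀ (i : B) (w u : σ.I),
    (u : W) = cs.simple i * (w : W) * σ.star (cs.simple i) →
    cs.simple i * (w : W) ≠ (w : W) * σ.star (cs.simple i) →
    cs.length (cs.simple i * (w : W)) = cs.length (w : W) + 1 →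
    K.t (cs.simple i) • a w = a u
  smul₂ : ∀ (i : B) (w u : σ.I),
    (u : W) = cs.simple i * (w : W) →
    cs.simple i * (w : W) = (w : W) * σ.star (cs.simple i) →
    cs.length (cs.simple i * (w : W)) = cs.length (w : W) + 1 →
    K.t (cs.simple i) • a w = (qq + 1) • a u + qq • a w
  smul₃ : ∀ (i : B) (w u : σ.I),
    (u : W) = cs.simple i * (w : W) →
    cs.simple i * (w : W) = (w : W) * σ.star (cs.simple i) →
    cs.length (cs.simple i * (w : W)) + 1 = cs.length (w : W) →
    K.t (cs.simple i) • a w = (qq ^ 2 - qq) • a u + (qq ^ 2 - qq - 1) • a w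
  smul₄ : ∀ (i : B) (w u : σ.I),
    (u : W) = cs.simple i * (w : W) * σ.star (cs.simple i) →
    cs.simple i * (w : W) ≠ (w : W) * σ.star (cs.simple i) →
    cs.length (cs.simple i * (w : W)) + 1 = cs.length (w : W) →
    K.t (cs.simple i) • a w = (qq ^ 2) • a u + (qq ^ 2 - 1) • a w

attribute [instance] LVMod.addCommGroup LVMod.modA LVMod.modH LVMod.tower

/-- The Lusztig–Vogan module together with its bar operator, the twisted Kazhdan–Lusztig
polynomials `P^σ_{y,w}` and the twisted Kazhdan–Lusztig basis `A_w`. -/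
structure TKLData (cs : CoxeterSystem M W) (σ : StarInv cs) (K : HeckeBar cs (qq ^ 2))
    extends LVMod cs σ K.toHecke where
  barM : Mod →+ Mod
  barM_invol : ∀ m : Mod, barM (barM m) = m
  barM_one : barM (a ⟨1, σ.one_mem⟩) = a ⟨1, σ.one_mem⟩
  barM_smul : ∀ (h : K.carrier) (m : Mod), barM (h • m) = K.bar h • barM m
  Pσ : W → W → Polynomial ℤ
  Pσ_diag : ∀ w : σ.I, Pσ (w : W) (w : W) = 1
  Pσ_zero : ∀ y w : σ.I, ¬ BruhatLT cs (y : W) (w : W) → (y : W) ≠ (w : W) →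
      Pσ (y : W) (w : W) = 0
  Pσ_deg : ∀ y w : σ.I, BruhatLT cs (y : W) (w : W) →
      2 * (Pσ (y : W) (w : W)).natDegree + 1 ≤ cs.length (w : W) - cs.length (y : W)
  A : Module.Basis σ.I A𝕃 Mod
  A_repr : ∀ w y : σ.I, a.repr (A w) y =
      LaurentPolynomial.T (-(cs.length (w : W) : ℤ)) * Polynomial.aeval qq (Pσ (y : W) (w : W))
  A_bar : ∀ w : σ.I, barM (A w) = A w

/-- Structure constants `h^σ_{x,y;z}` defined by `C_x A_y = Σ_z h^σ_{x,y;z} A_z`. -/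
def TKLData.hσ {σ : StarInv cs} {K : HeckeBar cs (qq ^ 2)} (D : TKLData cs σ K)
    {P : W → W → Polynomial ℤ} (C2 : C2Data cs K P) (x : W) (y z : σ.I) : A𝕃 :=
  D.A.repr (C2.C x • D.A y) z

/-- The coefficient of `v^m` in `p(v²)`, for a polynomial `p ∈ ℤ[q]`. -/
def coeffV (p : Polynomial ℤ) (m : ℤ) : ℤ :=
  if 0 ≤ m ∧ m % 2 = 0 then p.coeff (m / 2).toNat else 0

/-- `μ^σ(y,w)`: the coefficient of `v^{ℓ(w)-ℓ(y)-1}` in `P^σ_{y,w}`. -/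
def TKLData.μ {σ : StarInv cs} {K : HeckeBar cs (qq ^ 2)} (D : TKLData cs σ K)
    (y w : W) : ℤ :=
  coeffV (D.Pσ y w) ((cs.length w : ℤ) - cs.length y - 1)

/-- `ν^σ(y,w)`: the coefficient of `v^{ℓ(w)-ℓ(y)-2}` in `P^σ_{y,w}`. -/
def TKLData.ν {σ : StarInv cs} {K : HeckeBar cs (qq ^ 2)} (D : TKLData cs σ K)
    (y w : W) : ℤ :=
  coeffV (D.Pσ y w) ((cs.length w : ℤ) - cs.length y - 2)

/-- `μ^σ(y,w;s)`. -/
def TKLData.μs {σ : StarInv cs} {K : HeckeBar cs (qq ^ 2)} (D : TKLData cs σ K)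
    (y w : W) (i : B) : ℤ :=
  D.ν y w
    + (if cs.simple i * y = y * σ.star (cs.simple i) then D.μ (cs.simple i * y) w else 0)
    - (if cs.simple i * w = w * σ.star (cs.simple i) then D.μ y (cs.simple i * w) else 0)
    - ∑ᶠ (x : W) (_ : x ∈ σ.I ∧ cs.length (cs.simple i * x) < cs.length x),
        D.μ y x * D.μ x w

/-- `m^σ(y →_s w)`. -/
def TKLData.mσ {σ : StarInv cs} {K : HeckeBar cs (qq ^ 2)} (D : TKLData cs σ K)
    (y w : W) (i : B) : A𝕃 :=
  if ((cs.length w : ℤ) - cs.length y) % 2 = 1 then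
    (D.μ y w : ℤ) • (LaurentPolynomial.T 1 + LaurentPolynomial.T (-1))
  else ((D.μs y w i : ℤ) : A𝕃)

end TwistedKL

namespace TwistedKL

variable {B : Type} {W : Type} [Group W] {M : CoxeterMatrix B}


section SE

variable (cs : CoxeterSystem M W)

lemma tkl_prod_map_alt {G : Type*} [Monoid G] (g : B → G) (i i' : B) (m : ℕ) :
    ((CoxeterSystem.alternatingWord i i' (2 * m)).map g).prod = (g i * g i') ^ m := by
  induction m with
  | zero => simp [CoxeterSystem.alternatingWord]
  | succ m ih =>
    have h2 : 2 * (m + 1) = (2 * m + 1) + 1 := by ring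
    rw [h2, CoxeterSystem.alternatingWord_succ', CoxeterSystem.alternatingWord_succ',
      if_neg (by simp [parity_simps]), if_pos (by simp [parity_simps]),
      List.map_cons, List.map_cons, List.prod_cons, List.prod_cons, ih, pow_succ']
    rw [mul_assoc]

lemma tkl_ris_cons (j : B) (ω : List B) :
    cs.rightInvSeq (j :: ω)
      = ((cs.wordProd ω)⁻¹ * cs.simple j * cs.wordProd ω) :: cs.rightInvSeq ω := rfl

lemma tkl_conj_simple (i i' : B) :
    cs.simple i' * (cs.simple i * cs.simple i') * (cs.simple i')⁻¹
      = (cs.simple i * cs.simple i')⁻¹ := by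
  rw [cs.inv_simple, mul_inv_rev, cs.inv_simple, cs.inv_simple]
  rw [mul_assoc (cs.simple i') (cs.simple i * cs.simple i') (cs.simple i'),
    mul_assoc (cs.simple i) (cs.simple i') (cs.simple i'),
    cs.simple_mul_simple_self, mul_one]

lemma tkl_conj_pow (i i' : B) (e : ℤ) :
    cs.simple i' * (cs.simple i * cs.simple i') ^ e
      = (cs.simple i * cs.simple i') ^ (-e) * cs.simple i' := by
  have key : cs.simple i' * (cs.simple i * cs.simple i') ^ e * (cs.simple i')⁻¹
      = (cs.simple i * cs.simple i') ^ (-e) := by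
    rw [← conj_zpow, tkl_conj_simple, inv_zpow, ← zpow_neg]
  rw [← key, inv_mul_cancel_right]

lemma tkl_si'_si (i i' : B) :
    cs.simple i' * cs.simple i = (cs.simple i * cs.simple i')⁻¹ := by
  rw [mul_inv_rev, cs.inv_simple, cs.inv_simple]

lemma tkl_ris_alt (i i' : B) (n : ℕ) :
    cs.rightInvSeq (CoxeterSystem.alternatingWord i i' n)
      = (List.range n).reverse.map
          (fun k : ℕ => (cs.simple i * cs.simple i') ^ (-(k : ℤ)) * cs.simple i') := by
  induction n with
  | zero => simp [CoxeterSystem.alternatingWord, CoxeterSystem.rightInvSeq]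
  | succ n ih =>
    rw [CoxeterSystem.alternatingWord_succ', List.range_succ, List.reverse_append,
      List.reverse_singleton, List.singleton_append, List.map_cons, tkl_ris_cons, ih]
    congr 1
    have hq := Nat.div_add_mod n 2
    rw [cs.prod_alternatingWord_eq_mul_pow]
    by_cases he : Even n
    · have hmod : n % 2 = 0 := Nat.even_iff.mp he
      rw [if_pos he, if_pos he, one_mul, ← zpow_natCast (cs.simple i * cs.simple i') (n / 2)]
      rw [mul_assoc, tkl_conj_pow, ← mul_assoc, ← zpow_neg, ← zpow_add]
      have harith : -((n / 2 : ℕ) : ℤ) + -((n / 2 : ℕ) : ℤ) = -(n : ℤ) := by push_cast; omega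
      rw [harith]
    · have hmod : n % 2 = 1 := Nat.not_even_iff.mp he
      rw [if_neg he, if_neg he, ← zpow_natCast (cs.simple i * cs.simple i') (n / 2)]
      have e2 : cs.simple i * (cs.simple i' * (cs.simple i * cs.simple i') ^ ((n / 2 : ℕ) : ℤ))
          = (cs.simple i * cs.simple i') ^ (1 + ((n / 2 : ℕ) : ℤ)) := by
        rw [← mul_assoc, ← zpow_one_add]
      rw [mul_inv_rev, cs.inv_simple, ← zpow_neg, mul_assoc, e2, mul_assoc, tkl_conj_pow,
        ← mul_assoc, ← zpow_add]
      have harith : -((n / 2 : ℕ) : ℤ) + -(1 + ((n / 2 : ℕ) : ℤ)) = -(n : ℤ) := by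
        push_cast; omega
      rw [harith]

lemma tkl_count_even (i i' : B) (t : W) :
    Even ((cs.rightInvSeq (CoxeterSystem.alternatingWord i i' (2 * M i i'))).count t) := by
  rw [tkl_ris_alt]
  set g : ℕ → W := fun k : ℕ => (cs.simple i * cs.simple i') ^ (-(k : ℤ)) * cs.simple i' with hg
  rw [List.map_reverse, List.count_reverse, two_mul, List.range_add, List.map_append,
    List.count_append, List.map_map]
  have hmap : (List.range (M i i')).map (g ∘ (fun k => M i i' + k))
      = (List.range (M i i')).map g := by
    apply List.map_congr_left
    intro k _
    show g (M i i' + k) = g k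
    rw [hg]
    simp only
    have : (-((M i i' + k : ℕ) : ℤ)) = -((M i i' : ℕ) : ℤ) + -(k : ℤ) := by push_cast; ring
    rw [this, zpow_add, zpow_neg, zpow_natCast, cs.simple_mul_simple_pow, inv_one, one_mul]
  rw [hmap]
  exact ⟨(List.count t ((List.range (M i i')).map g)), rfl⟩


/-- The sign action on `W × ℤˣ`. -/
def tklF (j : B) : Equiv.Perm (W × ℤˣ) :=
  Function.Involutive.toPerm
    (fun p => (cs.simple j * p.1 * cs.simple j, if p.1 = cs.simple j then -p.2 else p.2))
    (by
      intro p
      obtain ⟨x, e⟩ := p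
      simp only
      have hx : cs.simple j * (cs.simple j * x * cs.simple j) * cs.simple j = x := by
        rw [mul_assoc (cs.simple j) x, cs.simple_mul_simple_cancel_left,
          cs.simple_mul_simple_cancel_right]
      have hcond : (cs.simple j * x * cs.simple j = cs.simple j) ↔ x = cs.simple j := by
        constructor
        · intro h
          have h2 := congrArg (fun z => cs.simple j * z * cs.simple j) h
          rw [hx, cs.simple_mul_simple_self, one_mul] at h2
          exact h2
        · rintro rfl
          rw [cs.simple_mul_simple_self, one_mul]
      by_cases hxe : x = cs.simple j
      · simp [hx, hcond, hxe]
      · simp [hx, hcond, hxe])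

lemma tklF_apply (j : B) (p : W × ℤˣ) :
    tklF cs j p = (cs.simple j * p.1 * cs.simple j, if p.1 = cs.simple j then -p.2 else p.2) :=
  rfl

lemma tkl_prod_fperm (ω : List B) (p : W × ℤˣ) :
    ((ω.map (tklF cs)).prod) p
      = (cs.wordProd ω * p.1 * (cs.wordProd ω)⁻¹,
         (-1) ^ ((cs.rightInvSeq ω).count p.1) * p.2) := by
  induction ω with
  | nil => simp [CoxeterSystem.rightInvSeq]
  | cons j ω ih =>
    rw [List.map_cons, List.prod_cons, Equiv.Perm.mul_apply, ih, tklF_apply, tkl_ris_cons]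
    have hiff : (cs.wordProd ω * p.1 * (cs.wordProd ω)⁻¹ = cs.simple j)
        ↔ (p.1 = (cs.wordProd ω)⁻¹ * cs.simple j * cs.wordProd ω) := by
      constructor
      · intro h; rw [← h]; group
      · intro h; rw [h]; group
    have hfst : cs.simple j * (cs.wordProd ω * p.1 * (cs.wordProd ω)⁻¹) * cs.simple j
        = cs.wordProd (j :: ω) * p.1 * (cs.wordProd (j :: ω))⁻¹ := by
      rw [cs.wordProd_cons, mul_inv_rev, cs.inv_simple]
      group
    by_cases hc : p.1 = (cs.wordProd ω)⁻¹ * cs.simple j * cs.wordProd ω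
    · rw [if_pos (hiff.mpr hc)]
      simp only [Prod.mk.injEq]
      constructor
      · exact hfst
      · rw [← hc, List.count_cons_self, pow_succ, mul_neg_one, neg_mul]
    · rw [if_neg (fun h => hc (hiff.mp h))]
      simp only [Prod.mk.injEq]
      constructor
      · exact hfst
      · rw [List.count_cons_of_ne (Ne.symm hc)]

lemma tkl_liftable : M.IsLiftable (tklF cs) := by
  intro i1 i2
  rw [← tkl_prod_map_alt (tklF cs) i1 i2 (M i1 i2)]
  apply Equiv.ext
  intro p
  rw [tkl_prod_fperm]
  have h1 : cs.wordProd (CoxeterSystem.alternatingWord i1 i2 (2 * M i1 i2)) = 1 := by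
    have h2 : cs.wordProd (CoxeterSystem.alternatingWord i1 i2 (2 * M i1 i2))
        = ((CoxeterSystem.alternatingWord i1 i2 (2 * M i1 i2)).map cs.simple).prod := rfl
    rw [h2, tkl_prod_map_alt cs.simple i1 i2 (M i1 i2)]
    exact cs.simple_mul_simple_pow i1 i2
  obtain ⟨r, hr⟩ := tkl_count_even cs i1 i2 p.1
  rw [h1, hr, ← two_mul, pow_mul]
  norm_num

/-- The sign homomorphism `W →* Perm (W × ℤˣ)`. -/
def tklPhi : W →* Equiv.Perm (W × ℤˣ) := cs.lift ⟨tklF cs, tkl_liftable cs⟩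

lemma tklPhi_simple (j : B) : tklPhi cs (cs.simple j) = tklF cs j :=
  cs.lift_apply_simple (tkl_liftable cs) j

lemma tklPhi_wordProd (ω : List B) :
    tklPhi cs (cs.wordProd ω) = (ω.map (tklF cs)).prod := by
  induction ω with
  | nil => rw [cs.wordProd_nil, map_one, List.map_nil, List.prod_nil]
  | cons j ω ih => rw [cs.wordProd_cons, map_mul, tklPhi_simple, List.map_cons,
      List.prod_cons, ih]

lemma tklPhi_eval (ω : List B) (p : W × ℤˣ) :
    tklPhi cs (cs.wordProd ω) p
      = (cs.wordProd ω * p.1 * (cs.wordProd ω)⁻¹,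
         (-1) ^ ((cs.rightInvSeq ω).count p.1) * p.2) := by
  rw [tklPhi_wordProd, tkl_prod_fperm]

lemma tklPhi_reflection {t : W} (ht : cs.IsReflection t) (ε : ℤˣ) :
    tklPhi cs t (t, ε) = (t, -ε) := by
  obtain ⟨x, j, rfl⟩ := ht
  obtain ⟨ωx, _, hx⟩ := cs.exists_reduced_word' x
  have hxr : cs.wordProd ωx.reverse = x⁻¹ := by rw [cs.wordProd_reverse, ← hx]
  set c1 : ℤˣ := (-1) ^ ((cs.rightInvSeq ωx).count (cs.simple j)) with hc1
  set c2 : ℤˣ := (-1) ^ ((cs.rightInvSeq ωx.reverse).count (x * cs.simple j * x⁻¹)) with hc2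
  have e2 : ∀ δ : ℤˣ, tklPhi cs x⁻¹ (x * cs.simple j * x⁻¹, δ) = (cs.simple j, c2 * δ) := by
    intro δ
    have h := tklPhi_eval cs ωx.reverse (x * cs.simple j * x⁻¹, δ)
    dsimp only at h
    rw [hxr] at h
    rw [h]
    simp only [Prod.mk.injEq]
    constructor
    · group
    · trivial
  have e1 : ∀ δ : ℤˣ, tklPhi cs x (cs.simple j, δ) = (x * cs.simple j * x⁻¹, c1 * δ) := by
    intro δ
    have h := tklPhi_eval cs ωx (cs.simple j, δ)
    dsimp only at h
    rw [← hx] at h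
    rw [h]
  have hmulinv : tklPhi cs x (tklPhi cs x⁻¹ (x * cs.simple j * x⁻¹, 1))
      = (x * cs.simple j * x⁻¹, 1) := by
    rw [← Equiv.Perm.mul_apply, ← map_mul, mul_inv_cancel, map_one, Equiv.Perm.one_apply]
  rw [e2 1, e1 (c2 * 1)] at hmulinv
  have hc : c1 * c2 = 1 := by
    have h2 := congrArg Prod.snd hmulinv
    dsimp only at h2
    rw [mul_one] at h2
    exact h2
  have expand : tklPhi cs (x * cs.simple j * x⁻¹)
      = tklPhi cs x * (tklPhi cs (cs.simple j) * tklPhi cs x⁻¹) := by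
    rw [← map_mul, ← map_mul, mul_assoc]
  rw [expand, Equiv.Perm.mul_apply, Equiv.Perm.mul_apply, e2 ε, tklPhi_simple]
  have happ : (tklF cs j) (cs.simple j, c2 * ε) = (cs.simple j, -(c2 * ε)) := by
    rw [tklF_apply]
    simp only [if_pos rfl, Prod.mk.injEq]
    constructor
    · rw [cs.simple_mul_simple_self, one_mul]
    · trivial
  rw [happ, e1]
  rw [mul_neg, ← mul_assoc, hc, one_mul]

/-- Strong exchange, right-handed version. -/
theorem tkl_strongExchange_right (ω : List B) {t : W} (ht : cs.IsReflection t)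
    (hlt : cs.length (cs.wordProd ω * t) < cs.length (cs.wordProd ω)) :
    t ∈ cs.rightInvSeq ω := by
  by_contra hmem
  have hc : (cs.rightInvSeq ω).count t = 0 := List.count_eq_zero.mpr hmem
  obtain ⟨χ, hχred, hχ⟩ := cs.exists_reduced_word' (cs.wordProd ω * t)
  have e1 : tklPhi cs (cs.wordProd ω * t) (t, 1)
      = (cs.wordProd ω * t * (cs.wordProd ω)⁻¹, -1) := by
    rw [map_mul, Equiv.Perm.mul_apply, tklPhi_reflection cs ht, tklPhi_eval cs ω (t, -1), hc]
    rw [pow_zero, one_mul]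
  have e2 : tklPhi cs (cs.wordProd ω * t) (t, 1)
      = (cs.wordProd χ * t * (cs.wordProd χ)⁻¹,
         (-1) ^ ((cs.rightInvSeq χ).count t) * 1) := by
    rw [hχ]
    exact tklPhi_eval cs χ (t, 1)
  have hsign : ((-1 : ℤˣ) ^ ((cs.rightInvSeq χ).count t)) = -1 := by
    have h2 := congrArg Prod.snd (e1.symm.trans e2)
    dsimp only at h2
    rw [mul_one] at h2
    exact h2.symm
  have hmemχ : t ∈ cs.rightInvSeq χ := by
    by_contra hmem2
    rw [List.count_eq_zero.mpr hmem2, pow_zero] at hsign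
    exact absurd hsign (by decide)
  have hinv := (cs.isRightInversion_of_mem_rightInvSeq hχred hmemχ).2
  rw [← hχ, mul_assoc, ht.mul_self, mul_one] at hinv
  exact absurd hinv (lt_asymm hlt)

/-- Strong exchange, left-handed version. -/
theorem tkl_strongExchange_left (ω : List B) {t : W} (ht : cs.IsReflection t)
    (hlt : cs.length (t * cs.wordProd ω) < cs.length (cs.wordProd ω)) :
    t ∈ cs.leftInvSeq ω := by
  have hlt2 : cs.length (cs.wordProd ω.reverse * t) < cs.length (cs.wordProd ω.reverse) := by
    rw [cs.wordProd_reverse]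
    have h2 : (cs.wordProd ω)⁻¹ * t = (t * cs.wordProd ω)⁻¹ := by
      rw [mul_inv_rev, ht.inv]
    rw [h2, cs.length_inv, cs.length_inv]
    exact hlt
  have := tkl_strongExchange_right cs ω.reverse ht hlt2
  rw [cs.rightInvSeq_reverse, List.mem_reverse] at this
  exact this

/-- Strong exchange: erase a letter. -/
theorem tkl_exchange_erase (ω : List B) {t : W} (ht : cs.IsReflection t)
    (hlt : cs.length (t * cs.wordProd ω) < cs.length (cs.wordProd ω)) :
    ∃ j, j < ω.length ∧ t * cs.wordProd ω = cs.wordProd (ω.eraseIdx j) := by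
  have hmem := tkl_strongExchange_left cs ω ht hlt
  obtain ⟨j, hj, hget⟩ := List.mem_iff_getElem.mp hmem
  have hjlen : j < ω.length := by
    have := cs.length_leftInvSeq ω
    omega
  refine ⟨j, hjlen, ?_⟩
  have hgetD : (cs.leftInvSeq ω).getD j 1 = t := by
    rw [List.getD_eq_getElem _ 1 hj, hget]
  rw [← hgetD, cs.getD_leftInvSeq_mul_wordProd]


/-- Deletion: any word has a reduced sublist with the same product. -/
lemma tkl_exists_reduced_sublist (ω : List B) :
    ∃ γ : List B, γ.Sublist ω ∧ cs.IsReduced γ ∧ cs.wordProd γ = cs.wordProd ω := by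
  induction ω with
  | nil => exact ⟨[], List.Sublist.refl _, by simp [CoxeterSystem.IsReduced], rfl⟩
  | cons i ω ih =>
    obtain ⟨γ, hsub, hred, hprod⟩ := ih
    rcases cs.length_simple_mul (cs.wordProd γ) i with hup | hdown
    · refine ⟨i :: γ, hsub.cons₂ i, ?_, ?_⟩
      · show cs.length (cs.wordProd (i :: γ)) = (i :: γ).length
        rw [cs.wordProd_cons, hup, hred]
        simp
      · rw [cs.wordProd_cons, cs.wordProd_cons, hprod]
    · have hlt : cs.length (cs.simple i * cs.wordProd γ) < cs.length (cs.wordProd γ) := by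
        omega
      obtain ⟨j, hj, herase⟩ := tkl_exchange_erase cs γ (cs.isReflection_simple i) hlt
      refine ⟨γ.eraseIdx j, ((γ.eraseIdx_sublist j).trans hsub).cons i, ?_, ?_⟩
      · show cs.length (cs.wordProd (γ.eraseIdx j)) = (γ.eraseIdx j).length
        have hlen := List.length_eraseIdx_add_one hj
        rw [← herase]
        have : cs.length (cs.simple i * cs.wordProd γ) + 1 = γ.length := by
          rw [hdown, hred]
        omega
      · rw [← herase, cs.wordProd_cons, hprod]

/-- One step of the Bruhat chain order. -/
def BStep (u v : W) : Prop :=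
  ∃ t : W, cs.IsReflection t ∧ v = t * u ∧ cs.length u < cs.length v

/-- The Bruhat chain order. -/
def BChain : W → W → Prop := Relation.ReflTransGen (BStep cs)

lemma tkl_bchain_length {u v : W} (h : BChain cs u v) : cs.length u ≤ cs.length v := by
  induction h with
  | refl => exact le_refl _
  | tail _ hstep ih => obtain ⟨t, _, _, hlen⟩ := hstep; omega

lemma tkl_bchain_eq_or_lt {u v : W} (h : BChain cs u v) :
    u = v ∨ cs.length u < cs.length v := by
  induction h with
  | refl => exact Or.inl rfl
  | tail hc hstep ih =>
    obtain ⟨t, _, _, hlen⟩ := hstep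
    right
    have := tkl_bchain_length cs hc
    omega

lemma tkl_bchain_inv {u v : W} (h : BChain cs u v) : BChain cs u⁻¹ v⁻¹ := by
  induction h with
  | refl => exact Relation.ReflTransGen.refl
  | @tail b c hc hstep ih =>
    obtain ⟨t, ht, rfl, hlen⟩ := hstep
    refine ih.tail ⟨b⁻¹ * t * b, ?_, ?_, ?_⟩
    · have := ht.conj b⁻¹
      rwa [inv_inv] at this
    · rw [mul_inv_rev, ht.inv, mul_assoc, mul_inv_cancel, mul_one]
    · rw [cs.length_inv, cs.length_inv]
      exact hlen

lemma tkl_step_left (w : W) (i : B) (h : cs.length w < cs.length (cs.simple i * w)) :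
    BStep cs w (cs.simple i * w) :=
  ⟨cs.simple i, cs.isReflection_simple i, rfl, h⟩

lemma tkl_step_right (w : W) (i : B) (h : cs.length w < cs.length (w * cs.simple i)) :
    BStep cs w (w * cs.simple i) := by
  refine ⟨w * cs.simple i * w⁻¹, (cs.isReflection_simple i).conj w, ?_, h⟩
  group

/-- Single-step lifting property. -/
lemma tkl_zsingle {u v : W} (h : BStep cs u v) (i : B) :
    BChain cs (u * cs.simple i) v ∨ BChain cs (u * cs.simple i) (v * cs.simple i) := by
  obtain ⟨t, ht, rfl, hlen⟩ := h
  rcases cs.length_mul_simple u i with hup | hdown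
  case inr =>
    -- descent of u : u * s i < u ≤ t * u
    left
    have h1 : BStep cs (u * cs.simple i) u := by
      have := tkl_step_right cs (u * cs.simple i) i (by
        rw [cs.simple_mul_simple_cancel_right]
        omega)
      rwa [cs.simple_mul_simple_cancel_right] at this
    exact (Relation.ReflTransGen.single h1).tail ⟨t, ht, rfl, hlen⟩
  case inl =>
    have hne : cs.length (t * (u * cs.simple i)) ≠ cs.length (u * cs.simple i) :=
      ht.length_mul_right_ne (u * cs.simple i)
    rcases Nat.lt_or_ge (cs.length (u * cs.simple i)) (cs.length (t * (u * cs.simple i)))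
      with hlt | hge
    · -- single step from u * s i to (t*u) * s i
      right
      refine Relation.ReflTransGen.single ⟨t, ht, by rw [mul_assoc], ?_⟩
      rw [mul_assoc]
      exact hlt
    · -- the hard case
      have hlt2 : cs.length (t * (u * cs.simple i)) < cs.length (u * cs.simple i) := by
        omega
      -- basic length bookkeeping
      have hvs : cs.length (t * u * cs.simple i) ≤ cs.length u := by
        have := ht.length_mul_right_ne (u * cs.simple i)
        rw [← mul_assoc] at hlt2
        omega
      rcases cs.length_mul_simple (t * u) i with h2 | h2
      · omega
      · -- ℓ(tus) + 1 = ℓ(tu) ; so ℓ(tu) ≤ ℓ(u) + 1 hence = ℓ(u)+1, ℓ(tus) = ℓ u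
        have hv : cs.length (t * u) = cs.length u + 1 := by omega
        have hvs' : cs.length (t * u * cs.simple i) = cs.length u := by omega
        obtain ⟨χ, hχred, hχ⟩ := cs.exists_reduced_word' (t * u * cs.simple i)
        set ω := χ ++ [i] with hω
        have hπω : cs.wordProd ω = t * u := by
          rw [hω, cs.wordProd_append, ← hχ, cs.wordProd_singleton,
            cs.simple_mul_simple_cancel_right]
        have hχlen : χ.length = cs.length u := by
          have h6 : cs.length (cs.wordProd χ) = χ.length := hχred
          rw [← hχ] at h6
          omega
        have hωred : cs.IsReduced ω := by
          show cs.length (cs.wordProd ω) = ω.length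
          rw [hπω, hω, List.length_append, List.length_singleton, hχlen, hv]
        have htt : t * (t * u) = u := by rw [← mul_assoc, ht.mul_self, one_mul]
        have hexlt : cs.length (t * cs.wordProd ω) < cs.length (cs.wordProd ω) := by
          rw [hπω, htt, hv]
          omega
        obtain ⟨j, hj, hje⟩ := tkl_exchange_erase cs ω ht hexlt
        rw [hπω, htt] at hje
        rw [hω, List.length_append, List.length_singleton] at hj
        by_cases hjlt : j < χ.length
        · exfalso
          have her : ω.eraseIdx j = χ.eraseIdx j ++ [i] := by
            rw [hω]
            exact List.eraseIdx_append_of_lt_length hjlt _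
          have h3 : u * cs.simple i = cs.wordProd (χ.eraseIdx j) := by
            rw [hje, her, cs.wordProd_append, cs.wordProd_singleton,
              cs.simple_mul_simple_cancel_right]
          have h4 : cs.length (u * cs.simple i) ≤ (χ.eraseIdx j).length := by
            rw [h3]
            exact cs.length_wordProd_le _
          have h5 := List.length_eraseIdx_add_one hjlt
          omega
        · have hjeq : j = χ.length := by omega
          have her : ω.eraseIdx j = χ := by
            rw [hω, hjeq, List.eraseIdx_append_of_length_le (le_refl χ.length)]
            simp
          rw [her, ← hχ] at hje
          left
          have h7 : u * cs.simple i = t * u := by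
            conv_lhs => rw [hje]
            rw [cs.simple_mul_simple_cancel_right]
          rw [h7]
          exact Relation.ReflTransGen.refl

/-- Lifting property for the chain order (right version). -/
lemma tkl_zlift {u v : W} (h : BChain cs u v) (i : B) :
    BChain cs (u * cs.simple i) v ∨ BChain cs (u * cs.simple i) (v * cs.simple i) := by
  induction h with
  | refl => exact Or.inr Relation.ReflTransGen.refl
  | @tail b c hc hstep ih =>
    rcases ih with h1 | h1
    · exact Or.inl (h1.tail hstep)
    · rcases tkl_zsingle cs hstep i with h2 | h2
      · exact Or.inl (h1.trans h2)
      · exact Or.inr (h1.trans h2)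

/-- Lifting property for the chain order (left version). -/
lemma tkl_zlift_left {u v : W} (h : BChain cs u v) (i : B) :
    BChain cs (cs.simple i * u) v ∨ BChain cs (cs.simple i * u) (cs.simple i * v) := by
  have h1 := tkl_zlift cs (tkl_bchain_inv cs h) i
  rcases h1 with h2 | h2
  · left
    have h3 := tkl_bchain_inv cs h2
    rwa [mul_inv_rev, cs.inv_simple, inv_inv, inv_inv] at h3
  · right
    have h3 := tkl_bchain_inv cs h2
    rwa [mul_inv_rev, cs.inv_simple, inv_inv, mul_inv_rev, cs.inv_simple, inv_inv] at h3

lemma tkl_red_cons_tail {i : B} {ω : List B} (h : cs.IsReduced (i :: ω)) :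
    cs.IsReduced ω := by
  have := CoxeterSystem.IsReduced.drop h 1
  simpa using this

lemma tkl_red_cons_up {i : B} {ω : List B} (h : cs.IsReduced (i :: ω)) :
    cs.length (cs.wordProd ω) < cs.length (cs.simple i * cs.wordProd ω) := by
  have h1 : cs.length (cs.wordProd (i :: ω)) = ω.length + 1 := by
    rw [h]
    simp
  have h2 : cs.length (cs.wordProd ω) = ω.length := tkl_red_cons_tail cs h
  rw [cs.wordProd_cons] at h1
  omega

/-- Subword implies chain (for reduced subwords). -/
lemma tkl_sublist_chain' {χ ω : List B} (h : χ.Sublist ω) :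
    cs.IsReduced ω → cs.IsReduced χ → BChain cs (cs.wordProd χ) (cs.wordProd ω) := by
  induction h with
  | slnil => intro _ _; exact Relation.ReflTransGen.refl
  | @cons l₁ l₂ a h ih =>
    intro hω hχ
    have hstep : BStep cs (cs.wordProd l₂) (cs.wordProd (a :: l₂)) := by
      rw [cs.wordProd_cons]
      exact tkl_step_left cs _ a (tkl_red_cons_up cs hω)
    exact (ih (tkl_red_cons_tail cs hω) hχ).tail hstep
  | @cons_cons l₁ l₂ a h ih =>
    intro hω hχ
    have ihc := ih (tkl_red_cons_tail cs hω) (tkl_red_cons_tail cs hχ)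
    rcases tkl_zlift_left cs ihc a with h1 | h1
    · rw [cs.wordProd_cons, cs.wordProd_cons]
      have hstep : BStep cs (cs.wordProd l₂) (cs.simple a * cs.wordProd l₂) :=
        tkl_step_left cs _ a (tkl_red_cons_up cs hω)
      exact h1.tail hstep
    · rw [cs.wordProd_cons, cs.wordProd_cons]
      exact h1

/-- Subword implies chain. -/
lemma tkl_sublist_chain {χ ω : List B} (h : χ.Sublist ω) (hω : cs.IsReduced ω) :
    BChain cs (cs.wordProd χ) (cs.wordProd ω) := by
  obtain ⟨γ, hsub, hred, hprod⟩ := tkl_exists_reduced_sublist cs χ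
  rw [← hprod]
  exact tkl_sublist_chain' cs (hsub.trans h) hω hred

/-- Chain implies Bruhat (subword in every reduced word). -/
lemma tkl_chain_to_bruhatLE {y w : W} (h : BChain cs y w) : BruhatLE cs y w := by
  induction h with
  | refl => exact fun ω hred hπ => ⟨ω, List.Sublist.refl _, hπ⟩
  | @tail b c hc hstep ih =>
    intro ω hred hπ
    obtain ⟨t, ht, hcb, hlen⟩ := hstep
    have hb : t * cs.wordProd ω = b := by
      rw [hπ, hcb, ← mul_assoc, ht.mul_self, one_mul]
    have hlt : cs.length (t * cs.wordProd ω) < cs.length (cs.wordProd ω) := by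
      rw [hb, hπ]
      exact hlen
    obtain ⟨j, hj, hje⟩ := tkl_exchange_erase cs ω ht hlt
    obtain ⟨γ, hγsub, hγred, hγprod⟩ := tkl_exists_reduced_sublist cs (ω.eraseIdx j)
    have hγb : cs.wordProd γ = b := by rw [hγprod, ← hje, hb]
    obtain ⟨χ, hχsub, hχprod⟩ := ih γ hγred hγb
    exact ⟨χ, (hχsub.trans hγsub).trans (ω.eraseIdx_sublist j), hχprod⟩

/-- Bruhat implies chain. -/
lemma tkl_bruhatLE_to_chain {y w : W} (h : BruhatLE cs y w) : BChain cs y w := by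
  obtain ⟨ω, hred, hπ⟩ := cs.exists_reduced_word' w
  obtain ⟨χ, hsub, hχ⟩ := h ω hred hπ.symm
  have := tkl_sublist_chain cs hsub hred
  rwa [hχ, ← hπ] at this

lemma tkl_bruhatLT_length {y w : W} (h : BruhatLT cs y w) :
    cs.length y < cs.length w := by
  rcases tkl_bchain_eq_or_lt cs (tkl_bruhatLE_to_chain cs h.1) with h1 | h1
  · exact absurd h1 h.2
  · exact h1


end SE

section Star
variable (cs : CoxeterSystem M W)

/-- `*` preserves length. -/
lemma tkl_star_length (σ : StarInv cs) (w : W) :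
    cs.length (σ.star w) = cs.length w := by
  have key : ∀ u : W, cs.length (σ.star u) ≤ cs.length u := by
    intro u
    obtain ⟨ω, hlen', hπ⟩ := cs.exists_reduced_word u
    have hlen : ω.length = cs.length u := by rw [hπ]; exact hlen'.symm
    have hmap : ∀ χ : List B, σ.star (cs.wordProd χ)
        = cs.wordProd (χ.map (fun b => Classical.choose (σ.star_simple b))) := by
      intro χ
      induction χ with
      | nil => simp
      | cons b χ ih =>
        rw [cs.wordProd_cons, map_mul, ih, List.map_cons, cs.wordProd_cons]
        congr 1
        exact Classical.choose_spec (σ.star_simple b)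
    calc cs.length (σ.star u) = cs.length (σ.star (cs.wordProd ω)) := by rw [← hπ]
      _ = cs.length (cs.wordProd (ω.map (fun b => Classical.choose (σ.star_simple b)))) := by
          rw [hmap]
      _ ≤ (ω.map (fun b => Classical.choose (σ.star_simple b))).length :=
          cs.length_wordProd_le _
      _ = ω.length := List.length_map _
      _ = cs.length u := hlen
  have h1 := key w
  have h2 := key (σ.star w)
  rw [σ.invol w] at h2
  omega

/-- For a twisted involution, `ℓ(w s*) = ℓ(s w)`. -/
lemma tkl_length_mul_star (σ : StarInv cs) {w : W} (hw : w ∈ σ.I) (i : B) :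
    cs.length (w * σ.star (cs.simple i)) = cs.length (cs.simple i * w) := by
  have h1 : (w * σ.star (cs.simple i))⁻¹ = σ.star (cs.simple i * w) := by
    rw [map_mul, hw, mul_inv_rev, σ.star_simple_inv]
  rw [← cs.length_inv, h1, tkl_star_length]

/-- If `s ∉ Des_L(w)` and `s w ≠ w s*` then `ℓ(s w s*) = ℓ(w) + 2`. -/
lemma tkl_length_sws (σ : StarInv cs) {w : W} (hw : w ∈ σ.I) {i : B}
    (hup : cs.length (cs.simple i * w) = cs.length w + 1)
    (hne : cs.simple i * w ≠ w * σ.star (cs.simple i)) :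
    cs.length (cs.simple i * w * σ.star (cs.simple i)) = cs.length w + 2 := by
  obtain ⟨i', hi'⟩ := σ.star_simple i
  have hu : cs.length (w * σ.star (cs.simple i)) = cs.length w + 1 := by
    rw [tkl_length_mul_star cs σ hw i, hup]
  rcases cs.length_simple_mul (w * σ.star (cs.simple i)) i with h2 | h2
  · rw [← mul_assoc] at h2
    omega
  · exfalso
    rw [← mul_assoc] at h2
    obtain ⟨χ, hχlen', hχ⟩ := cs.exists_reduced_word w
    have hχlen : χ.length = cs.length w := by rw [hχ]; exact hχlen'.symm
    set ω := χ ++ [i'] with hω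
    have hπω : cs.wordProd ω = w * σ.star (cs.simple i) := by
      rw [hω, cs.wordProd_append, ← hχ, cs.wordProd_singleton, hi']
    have hωred : cs.IsReduced ω := by
      show cs.length (cs.wordProd ω) = ω.length
      rw [hπω, hu, hω, List.length_append, List.length_singleton, hχlen]
    have hlt : cs.length (cs.simple i * cs.wordProd ω) < cs.length (cs.wordProd ω) := by
      rw [hπω, ← mul_assoc]
      omega
    obtain ⟨j, hj, hje⟩ := tkl_exchange_erase cs ω (cs.isReflection_simple i) hlt
    rw [hπω, ← mul_assoc] at hje
    rw [hω, List.length_append, List.length_singleton] at hj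
    by_cases hjlt : j < χ.length
    · have her : ω.eraseIdx j = χ.eraseIdx j ++ [i'] := by
        rw [hω]
        exact List.eraseIdx_append_of_lt_length hjlt _
      have h3 : cs.simple i * w = cs.wordProd (χ.eraseIdx j) := by
        have h4 : cs.simple i * w * σ.star (cs.simple i) * σ.star (cs.simple i)
            = cs.wordProd (χ.eraseIdx j ++ [i']) * σ.star (cs.simple i) := by
          rw [← her, ← hje]
        rw [cs.wordProd_append, cs.wordProd_singleton, ← hi'] at h4
        rw [mul_assoc, mul_assoc, ← map_mul, cs.simple_mul_simple_self, map_one, mul_one] at h4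
        rw [mul_assoc (cs.wordProd (χ.eraseIdx j)), ← map_mul, cs.simple_mul_simple_self,
          map_one, mul_one] at h4
        exact h4
      have h5 : cs.length (cs.simple i * w) ≤ (χ.eraseIdx j).length := by
        rw [h3]
        exact cs.length_wordProd_le _
      have h6 := List.length_eraseIdx_add_one hjlt
      omega
    · have hjeq : j = χ.length := by omega
      have her : ω.eraseIdx j = χ := by
        rw [hω, hjeq, List.eraseIdx_append_of_length_le (le_refl χ.length)]
        simp
      rw [her, ← hχ] at hje
      -- hje : s i * w * s* = w
      apply hne
      have h7 := congrArg (fun z => z * σ.star (cs.simple i)) hje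
      rw [mul_assoc, mul_assoc, ← map_mul, cs.simple_mul_simple_self, map_one, mul_one] at h7
      exact h7

/-- `w < s ⋉ w` when `s` is not a left descent of the twisted involution `w`. -/
lemma tkl_tw_chain (σ : StarInv cs) {w : W} (hw : w ∈ σ.I) {i : B}
    (hup : cs.length (cs.simple i * w) = cs.length w + 1) :
    BChain cs w (σ.tw (cs.simple i) w)
      ∧ cs.length w < cs.length (σ.tw (cs.simple i) w) := by
  unfold StarInv.tw
  split_ifs with hc
  · constructor
    · exact Relation.ReflTransGen.single (tkl_step_left cs w i (by omega))
    · omega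
  · obtain ⟨i', hi'⟩ := σ.star_simple i
    have h1 : cs.length (w * σ.star (cs.simple i)) = cs.length w + 1 := by
      rw [tkl_length_mul_star cs σ hw i, hup]
    have h2 : cs.length (cs.simple i * w * σ.star (cs.simple i)) = cs.length w + 2 :=
      tkl_length_sws cs σ hw hup hc
    have hstep1 : BStep cs w (w * σ.star (cs.simple i)) := by
      rw [hi']
      exact tkl_step_right cs w i' (by rw [← hi']; omega)
    have hstep2 : BStep cs (w * σ.star (cs.simple i))
        (cs.simple i * w * σ.star (cs.simple i)) := by
      have := tkl_step_left cs (w * σ.star (cs.simple i)) i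
        (by rw [← mul_assoc]; omega)
      rwa [← mul_assoc] at this
    exact ⟨(Relation.ReflTransGen.single hstep1).tail hstep2, by omega⟩

/-- Membership of `s u` in `I_*` when `s u = u s*`. -/
lemma tkl_mem_I_smul (σ : StarInv cs) {u : W} (hu : u ∈ σ.I) {i : B}
    (hc : cs.simple i * u = u * σ.star (cs.simple i)) :
    cs.simple i * u ∈ σ.I := by
  have hu' : σ.star u = u⁻¹ := hu
  have hstar : σ.star (cs.simple i) = u⁻¹ * (cs.simple i * u) := by
    rw [hc]
    group
  show σ.star (cs.simple i * u) = (cs.simple i * u)⁻¹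
  rw [map_mul, hu', hstar, mul_inv_rev, cs.inv_simple]
  group

end Star


section Coeff

lemma tkl_coeffV_neg {p : Polynomial ℤ} {m : ℤ} (h : ¬(0 ≤ m ∧ m % 2 = 0)) :
    coeffV p m = 0 := if_neg h

lemma tkl_coeffV_zero (m : ℤ) : coeffV (0 : Polynomial ℤ) m = 0 := by
  unfold coeffV
  split_ifs <;> simp

variable (cs : CoxeterSystem M W)

lemma tkl_mu_ne {σ : StarInv cs} {K : HeckeBar cs (qq ^ 2)} (D : TKLData cs σ K)
    {y w : W} (hy : y ∈ σ.I) (hw : w ∈ σ.I) (h : D.μ y w ≠ 0) : BruhatLT cs y w := by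
  by_contra hn
  apply h
  unfold TKLData.μ
  by_cases he : y = w
  · subst he
    have h2 : D.Pσ y y = 1 := D.Pσ_diag ⟨y, hy⟩
    rw [h2]
    exact tkl_coeffV_neg (by omega)
  · have h2 : D.Pσ y w = 0 := D.Pσ_zero ⟨y, hy⟩ ⟨w, hw⟩ hn he
    rw [h2]
    exact tkl_coeffV_zero _

lemma tkl_nu_ne {σ : StarInv cs} {K : HeckeBar cs (qq ^ 2)} (D : TKLData cs σ K)
    {y w : W} (hy : y ∈ σ.I) (hw : w ∈ σ.I) (h : D.ν y w ≠ 0) : BruhatLT cs y w := by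
  by_contra hn
  apply h
  unfold TKLData.ν
  by_cases he : y = w
  · subst he
    have h2 : D.Pσ y y = 1 := D.Pσ_diag ⟨y, hy⟩
    rw [h2]
    exact tkl_coeffV_neg (by omega)
  · have h2 : D.Pσ y w = 0 := D.Pσ_zero ⟨y, hy⟩ ⟨w, hw⟩ hn he
    rw [h2]
    exact tkl_coeffV_zero _

end Coeff


/-- If `y,w ∈ I_*` and `s ∈ Des_L(y) \ Des_L(w)`, then `μ^σ(y,w;s)` is nonzero
only if `ℓ(w) − ℓ(y)` is even and `y < s⋉w` in the Bruhat order. -/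
theorem statement_0 (cs : CoxeterSystem M W) (σ : StarInv cs) (K : HeckeBar cs (qq ^ 2))
    (D : TKLData cs σ K) (y w : σ.I) (i : B)
    (hy : cs.length (cs.simple i * (y : W)) < cs.length (y : W))
    (hw : ¬ cs.length (cs.simple i * (w : W)) < cs.length (w : W))
    (hne : D.μs (y : W) (w : W) i ≠ 0) :
    ((cs.length (w : W) : ℤ) - cs.length (y : W)) % 2 = 0 ∧
      BruhatLT cs (y : W) (σ.tw (cs.simple i) (w : W)) := by
  have hy1 : cs.length (cs.simple i * (y : W)) + 1 = cs.length (y : W) := by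
    rcases cs.length_simple_mul (y : W) i with h | h
    · omega
    · exact h
  have hw1 : cs.length (cs.simple i * (w : W)) = cs.length (w : W) + 1 := by
    rcases cs.length_simple_mul (w : W) i with h | h
    · exact h
    · omega
  have hpar : ((cs.length (w : W) : ℤ) - cs.length (y : W)) % 2 = 0 := by
    by_contra hodd'
    have hodd : ((cs.length (w : W) : ℤ) - cs.length (y : W)) % 2 = 1 := by omega
    apply hne
    have h1 : D.ν (y : W) (w : W) = 0 := by
      unfold TKLData.ν
      exact tkl_coeffV_neg (by omega)
    have h2 : (if cs.simple i * (y : W) = (y : W) * σ.star (cs.simple i)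
        then D.μ (cs.simple i * (y : W)) (w : W) else 0) = 0 := by
      split_ifs with hc
      · unfold TKLData.μ
        exact tkl_coeffV_neg (by omega)
      · rfl
    have h3 : (if cs.simple i * (w : W) = (w : W) * σ.star (cs.simple i)
        then D.μ (y : W) (cs.simple i * (w : W)) else 0) = 0 := by
      split_ifs with hc
      · unfold TKLData.μ
        exact tkl_coeffV_neg (by omega)
      · rfl
    have h4 : (∑ᶠ (x : W) (_ : x ∈ σ.I ∧ cs.length (cs.simple i * x) < cs.length x),
        D.μ (y : W) x * D.μ x (w : W)) = 0 := by
      have hz : ∀ x : W, (∑ᶠ (_ : x ∈ σ.I ∧ cs.length (cs.simple i * x) < cs.length x),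
          D.μ (y : W) x * D.μ x (w : W)) = (0 : ℤ) := by
        intro x
        rw [finsum_eq_if]
        split_ifs with hc
        · have hm : ((cs.length x : ℤ) - cs.length (y : W) - 1) % 2 = 1
              ∨ ((cs.length (w : W) : ℤ) - cs.length x - 1) % 2 = 1 := by omega
          rcases hm with hm | hm
          · have hz1 : D.μ (y : W) x = 0 := by
              unfold TKLData.μ
              exact tkl_coeffV_neg (by omega)
            rw [hz1, zero_mul]
          · have hz1 : D.μ x (w : W) = 0 := by
              unfold TKLData.μ
              exact tkl_coeffV_neg (by omega)
            rw [hz1, mul_zero]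
        · rfl
      rw [finsum_congr hz]
      exact finsum_zero
    simp only [TKLData.μs]
    rw [h1, h2, h3, h4]
    ring
  have hbru : BruhatLT cs (y : W) (σ.tw (cs.simple i) (w : W)) := by
    by_contra hq
    apply hne
    obtain ⟨hch, hlt⟩ := tkl_tw_chain cs σ w.2 hw1
    have mk : ∀ (_ : BChain cs (y : W) (σ.tw (cs.simple i) (w : W))),
        cs.length (y : W) < cs.length (σ.tw (cs.simple i) (w : W)) → False := by
      intro hc2 hl2
      exact hq ⟨tkl_chain_to_bruhatLE cs hc2, fun he => by rw [he] at hl2; omega⟩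
    have h1 : D.ν (y : W) (w : W) = 0 := by
      by_contra h0
      have hyx : BruhatLT cs (y : W) (w : W) := tkl_nu_ne cs D y.2 w.2 h0
      have hlen := tkl_bruhatLT_length cs hyx
      exact mk ((tkl_bruhatLE_to_chain cs hyx.1).trans hch) (by omega)
    have h2 : (if cs.simple i * (y : W) = (y : W) * σ.star (cs.simple i)
        then D.μ (cs.simple i * (y : W)) (w : W) else 0) = 0 := by
      split_ifs with hc
      · by_contra h0
        have hmem := tkl_mem_I_smul cs σ y.2 hc
        have hsy : BruhatLT cs (cs.simple i * (y : W)) (w : W) :=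
          tkl_mu_ne cs D hmem w.2 h0
        have hlen := tkl_bruhatLT_length cs hsy
        have hchain := tkl_bruhatLE_to_chain cs hsy.1
        rcases tkl_zlift_left cs hchain i with hcase | hcase
        · rw [cs.simple_mul_simple_cancel_left] at hcase
          exact mk (hcase.trans hch) (by omega)
        · rw [cs.simple_mul_simple_cancel_left] at hcase
          have hcc : BChain cs (cs.simple i * (w : W)) (σ.tw (cs.simple i) (w : W)) := by
            unfold StarInv.tw
            split_ifs with htw
            · rw [htw]
              exact Relation.ReflTransGen.refl
            · obtain ⟨i', hi'⟩ := σ.star_simple i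
              have hl3 : cs.length (cs.simple i * (w : W) * σ.star (cs.simple i))
                  = cs.length (w : W) + 2 := tkl_length_sws cs σ w.2 hw1 htw
              refine Relation.ReflTransGen.single ?_
              rw [hi']
              exact tkl_step_right cs _ i' (by rw [← hi']; omega)
          exact mk (hcase.trans hcc) (by omega)
      · rfl
    have h3 : (if cs.simple i * (w : W) = (w : W) * σ.star (cs.simple i)
        then D.μ (y : W) (cs.simple i * (w : W)) else 0) = 0 := by
      split_ifs with hc
      · by_contra h0
        have hmem := tkl_mem_I_smul cs σ w.2 hc
        have hyw : BruhatLT cs (y : W) (cs.simple i * (w : W)) :=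
          tkl_mu_ne cs D y.2 hmem h0
        apply hq
        have htw : σ.tw (cs.simple i) (w : W) = cs.simple i * (w : W) := by
          unfold StarInv.tw
          rw [if_pos hc]
        rw [htw]
        exact hyw
      · rfl
    have h4 : (∑ᶠ (x : W) (_ : x ∈ σ.I ∧ cs.length (cs.simple i * x) < cs.length x),
        D.μ (y : W) x * D.μ x (w : W)) = 0 := by
      have hz : ∀ x : W, (∑ᶠ (_ : x ∈ σ.I ∧ cs.length (cs.simple i * x) < cs.length x),
          D.μ (y : W) x * D.μ x (w : W)) = (0 : ℤ) := by
        intro x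
        rw [finsum_eq_if]
        split_ifs with hc
        · by_cases hmy : D.μ (y : W) x = 0
          · rw [hmy, zero_mul]
          · by_cases hmx : D.μ x (w : W) = 0
            · rw [hmx, mul_zero]
            · exfalso
              have h5 := tkl_mu_ne cs D y.2 hc.1 hmy
              have h6 := tkl_mu_ne cs D hc.1 w.2 hmx
              have hl5 := tkl_bruhatLT_length cs h5
              have hl6 := tkl_bruhatLT_length cs h6
              exact mk (((tkl_bruhatLE_to_chain cs h5.1).trans
                (tkl_bruhatLE_to_chain cs h6.1)).trans hch) (by omega)
        · rfl
      rw [finsum_congr hz]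
      exact finsum_zero
    simp only [TKLData.μs]
    rw [h1, h2, h3, h4]
    ring
  exact ⟨hpar, hbru⟩

end TwistedKL
end
end

section
/- Let (W,S) be a universal Coxeter system with an S-preserving involution *. Suppose x ∈ W and s ∈ S ∩ I_* (i.e., s = s*) with s ∉ Des_R(x), and let n = ℓ(x). Then c(x⋉s, n+1) = Φ(A(x⋉s, n+1)), where Φ : M_{q²} → ℋ_q is the 𝒜-linear map with Φ(A_w) = c_w for all w ∈ I_*. -/
open Polynomial LaurentPolynomial
open scoped Classical

noncomputable section

namespace TwistedKL

variable {B : Type} {W : Type} [Group W] {M : CoxeterMatrix B}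


section Part1
variable (cs : CoxeterSystem M W)

/-- The function underlying the reflection permutation representation. -/
def refl2 (t : W) : W × ZMod 2 → W × ZMod 2 :=
  fun p => (t * p.1 * t⁻¹, p.2 + if p.1 = t then 1 else 0)

lemma refl2_invol {t : W} (ht : t * t = 1) (p : W × ZMod 2) : refl2 t (refl2 t p) = p := by
  have hinv : t⁻¹ = t := inv_eq_of_mul_eq_one_right ht
  obtain ⟨u, e⟩ := p
  have hcond : (t * u * t⁻¹ = t) ↔ (u = t) := by
    constructor
    · intro h
      have h2 : u = t⁻¹ * (t * u * t⁻¹) * t := by group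
      rw [h, hinv, ht, one_mul] at h2
      exact h2
    · rintro rfl; rw [ht, one_mul, hinv]
  have h1 : t * (t * u * t⁻¹) * t⁻¹ = u := by
    rw [hinv]
    calc t * (t * u * t) * t = (t * t) * u * (t * t) := by group
    _ = u := by rw [ht]; simp
  have h11 : (1 : ZMod 2) + 1 = 0 := by decide
  simp only [refl2]
  rw [Prod.mk.injEq]
  refine ⟨h1, ?_⟩
  simp only [hcond]
  by_cases h : u = t
  · simp [h, add_assoc, h11]
  · simp [h]

def reflPerm (t : W) (ht : t * t = 1) : Equiv.Perm (W × ZMod 2) :=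
  ⟨refl2 t, refl2 t, fun p => refl2_invol ht p, fun p => refl2_invol ht p⟩

lemma reflPerm_liftable (hu : IsUniversal cs) :
    CoxeterMatrix.IsLiftable M (fun i => reflPerm (cs.simple i) (cs.simple_mul_simple_self i)) := by
  intro i i'
  dsimp only
  rcases Nat.eq_zero_or_pos (M i i') with h0 | h0
  · rw [h0, pow_zero]
  by_cases hs : cs.simple i = cs.simple i'
  · have hfe : reflPerm (cs.simple i') (cs.simple_mul_simple_self i')
        = reflPerm (cs.simple i) (cs.simple_mul_simple_self i) := by
      apply Equiv.ext; intro p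
      simp [reflPerm, hs]
    rw [hfe]
    have h2 : reflPerm (cs.simple i) (cs.simple_mul_simple_self i) *
        reflPerm (cs.simple i) (cs.simple_mul_simple_self i) = 1 := by
      apply Equiv.ext; intro p
      exact refl2_invol (cs.simple_mul_simple_self i) p
    rw [h2, one_pow]
  · exact absurd (cs.simple_mul_simple_pow i i') (hu i i' hs (M i i') h0)

/-- The permutation representation `W →* Perm (W × ZMod 2)`. -/
def reflRep (hu : IsUniversal cs) : W →* Equiv.Perm (W × ZMod 2) :=
  cs.lift ⟨fun i => reflPerm (cs.simple i) (cs.simple_mul_simple_self i), reflPerm_liftable cs hu⟩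

lemma reflRep_simple (hu : IsUniversal cs) (i : B) : reflRep cs hu (cs.simple i)
    = reflPerm (cs.simple i) (cs.simple_mul_simple_self i) :=
  cs.lift_apply_simple _ i

lemma reflRep_wordProd (hu : IsUniversal cs) (ω : List B) (p : W × ZMod 2) :
    reflRep cs hu (cs.wordProd ω) p =
      (cs.wordProd ω * p.1 * (cs.wordProd ω)⁻¹,
        p.2 + ((cs.rightInvSeq ω).count p.1 : ZMod 2)) := by
  induction ω with
  | nil => simp [CoxeterSystem.rightInvSeq]
  | cons b ω ih =>
    rw [cs.wordProd_cons, map_mul, Equiv.Perm.mul_apply, ih, reflRep_simple]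
    show refl2 _ _ = _
    obtain ⟨u, e⟩ := p
    simp only [refl2, CoxeterSystem.rightInvSeq]
    have hcond : (cs.wordProd ω * u * (cs.wordProd ω)⁻¹ = cs.simple b)
        ↔ ((cs.wordProd ω)⁻¹ * cs.simple b * cs.wordProd ω = u) := by
      constructor
      · intro h; rw [← h]; group
      · intro h; rw [← h]; group
    rw [Prod.mk.injEq]
    constructor
    · simp only [mul_inv_rev, cs.inv_simple]; group
    · simp only [List.count_cons, hcond]
      push_cast
      by_cases h : (cs.wordProd ω)⁻¹ * cs.simple b * cs.wordProd ω = u <;> simp [h] <;> ring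

lemma count_ris_parity (hu : IsUniversal cs) {ω ω' : List B}
    (h : cs.wordProd ω = cs.wordProd ω') (t : W) :
    (((cs.rightInvSeq ω).count t : ZMod 2)) = ((cs.rightInvSeq ω').count t : ZMod 2) := by
  have h1 := reflRep_wordProd cs hu ω (t, 0)
  have h2 := reflRep_wordProd cs hu ω' (t, 0)
  rw [h] at h1
  rw [h1] at h2
  have := congrArg Prod.snd h2
  simpa using this

lemma mem_ris_of_isRightDescent (hu : IsUniversal cs) {w : W} {i : B}
    (hd : cs.length (w * cs.simple i) < cs.length w)
    {ω : List B} (hω : cs.IsReduced ω) (hπ : cs.wordProd ω = w) :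
    cs.simple i ∈ cs.rightInvSeq ω := by
  obtain ⟨τ, hτred, hτ⟩ := cs.exists_reduced_word' (w * cs.simple i)
  have hπ' : cs.wordProd (τ.concat i) = w := by
    rw [cs.wordProd_concat, ← hτ, mul_assoc, cs.simple_mul_simple_self, mul_one]
  have hnotmem : cs.simple i ∉ cs.rightInvSeq τ := by
    intro hmem
    have h2 := (cs.isRightInversion_of_mem_rightInvSeq hτred hmem).2
    rw [← hτ, mul_assoc, cs.simple_mul_simple_self, mul_one] at h2
    omega
  have hcount1 : (cs.rightInvSeq (τ.concat i)).count (cs.simple i) = 1 := by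
    rw [cs.rightInvSeq_concat, List.concat_eq_append, List.count_append]
    have hz : (List.map (⇑(MulAut.conj (cs.simple i))) (cs.rightInvSeq τ)).count (cs.simple i)
        = 0 := by
      rw [List.count_eq_zero]
      intro hmem
      obtain ⟨x, hx, hxe⟩ := List.mem_map.mp hmem
      apply hnotmem
      have hxi : x = cs.simple i := by
        have h3 := hxe
        simp only [MulAut.conj_apply, cs.inv_simple] at h3
        have h5 : cs.simple i * (cs.simple i * x * cs.simple i) * cs.simple i = x := by
          calc cs.simple i * (cs.simple i * x * cs.simple i) * cs.simple i
              = (cs.simple i * cs.simple i) * x * (cs.simple i * cs.simple i) := by group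
          _ = x := by rw [cs.simple_mul_simple_self]; simp
        rw [h3, cs.simple_mul_simple_self, one_mul] at h5
        exact h5.symm
      rwa [hxi] at hx
    rw [hz]
    simp
  have hpar := count_ris_parity cs hu (hπ'.trans hπ.symm) (cs.simple i)
  rw [hcount1] at hpar
  by_contra hnm
  rw [List.count_eq_zero_of_not_mem hnm] at hpar
  simp at hpar

/-- The exchange property (derived from the permutation representation). -/
lemma exchange (hu : IsUniversal cs) {w : W} {i : B}
    (hd : cs.length (w * cs.simple i) < cs.length w)
    {ω : List B} (hω : cs.IsReduced ω) (hπ : cs.wordProd ω = w) :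
    ∃ j < ω.length, w * cs.simple i = cs.wordProd (ω.eraseIdx j) := by
  have hmem := mem_ris_of_isRightDescent cs hu hd hω hπ
  obtain ⟨j, hj, hget⟩ := List.mem_iff_getElem.mp hmem
  have hj' : j < ω.length := by simpa using hj
  refine ⟨j, hj', ?_⟩
  have h2 := cs.wordProd_mul_getD_rightInvSeq ω j
  rw [List.getD_eq_getElem _ 1 hj, hget, hπ] at h2
  exact h2


end Part1


section Part2
variable (cs : CoxeterSystem M W)

lemma wordProd_adjacent (ρ₁ ρ₂ : List B) {x y : B} (h : cs.simple x = cs.simple y) :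
    cs.wordProd (ρ₁ ++ x :: y :: ρ₂) = cs.wordProd (ρ₁ ++ ρ₂) := by
  rw [cs.wordProd_append, cs.wordProd_append, cs.wordProd_cons, cs.wordProd_cons, h,
    cs.simple_mul_simple_cancel_left]

lemma reduced_adjacent_ne {ρ₁ ρ₂ : List B} {x y : B}
    (hr : cs.IsReduced (ρ₁ ++ x :: y :: ρ₂)) : cs.simple x ≠ cs.simple y := by
  intro h
  have h1 : cs.length (cs.wordProd (ρ₁ ++ x :: y :: ρ₂)) ≤ ρ₁.length + ρ₂.length := by
    rw [wordProd_adjacent cs ρ₁ ρ₂ h]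
    calc cs.length (cs.wordProd (ρ₁ ++ ρ₂)) ≤ (ρ₁ ++ ρ₂).length := cs.length_wordProd_le _
    _ = ρ₁.length + ρ₂.length := by simp
  rw [hr] at h1
  simp at h1

lemma isRightDescent_last {μ : List B} {e : B} (hr : cs.IsReduced (μ ++ [e])) :
    cs.length (cs.wordProd (μ ++ [e]) * cs.simple e) < cs.length (cs.wordProd (μ ++ [e])) := by
  have h1 : cs.wordProd (μ ++ [e]) * cs.simple e = cs.wordProd μ := by
    rw [cs.wordProd_append, cs.wordProd_singleton, mul_assoc, cs.simple_mul_simple_self, mul_one]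
  rw [h1, hr]
  calc cs.length (cs.wordProd μ) ≤ μ.length := cs.length_wordProd_le _
  _ < (μ ++ [e]).length := by simp

lemma isLeftDescent_head {μ : List B} {e : B} (hr : cs.IsReduced (e :: μ)) :
    cs.length (cs.simple e * cs.wordProd (e :: μ)) < cs.length (cs.wordProd (e :: μ)) := by
  have h1 : cs.simple e * cs.wordProd (e :: μ) = cs.wordProd μ := by
    rw [cs.wordProd_cons, ← mul_assoc, cs.simple_mul_simple_self, one_mul]
  rw [h1, hr]
  calc cs.length (cs.wordProd μ) ≤ μ.length := cs.length_wordProd_le _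
  _ < (e :: μ).length := by simp

lemma alternatingWord_getElem? (a b : B) : ∀ (k q : ℕ), q < k →
    (CoxeterSystem.alternatingWord a b k)[q]? = some (if Even (k - q) then a else b) := by
  intro k
  induction k generalizing a b with
  | zero => omega
  | succ k ih =>
    intro q hq
    rw [CoxeterSystem.alternatingWord_succ, List.concat_eq_append]
    rcases Nat.lt_or_ge q k with h | h
    · rw [List.getElem?_append_left (by simp [h] : q < (CoxeterSystem.alternatingWord b a k).length),
        ih b a q h]
      have h2 : k + 1 - q = (k - q) + 1 := by omega
      rw [h2]
      by_cases he : Even (k - q)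
      · rw [if_pos he, if_neg (fun hh => Nat.even_add_one.mp hh he)]
      · rw [if_neg he, if_pos (Nat.even_add_one.mpr he)]
    · have hqk : q = k := by omega
      subst hqk
      rw [List.getElem?_append_right (by simp)]
      simp

lemma alt_prod_ne (hu : IsUniversal cs) {a b : B} (hab : cs.simple a ≠ cs.simple b)
    {m : ℕ} (hm : 1 ≤ m) :
    cs.wordProd (CoxeterSystem.alternatingWord a b m)
      ≠ cs.wordProd (CoxeterSystem.alternatingWord b a m) := by
  intro h
  rw [cs.prod_alternatingWord_eq_mul_pow, cs.prod_alternatingWord_eq_mul_pow] at h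
  set X := cs.simple a * cs.simple b with hX
  have hY : cs.simple b * cs.simple a = X⁻¹ := by
    rw [hX, mul_inv_rev, cs.inv_simple, cs.inv_simple]
  by_cases he : Even m
  · rw [if_pos he, if_pos he, one_mul, one_mul, hY, inv_pow] at h
    have h2 : X ^ (m / 2) * X ^ (m / 2) = 1 := by nth_rewrite 2 [h]; simp
    rw [← pow_add] at h2
    have h3 : m / 2 + m / 2 = m := by obtain ⟨r, rfl⟩ := he; omega
    rw [h3] at h2
    exact hu a b hab m hm h2
  · rw [if_neg he, if_neg he, hY, inv_pow] at h
    -- h : s b * X^q = s a * (X^q)⁻¹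
    have h2 : X ^ (m / 2 + 1) = (X ^ (m / 2))⁻¹ := by
      rw [pow_succ', hX, mul_assoc, h, ← mul_assoc, cs.simple_mul_simple_self, one_mul]
    have h3 : X ^ (m / 2 + 1) * X ^ (m / 2) = 1 := by rw [h2]; simp
    rw [← pow_add] at h3
    have h4 : m / 2 + 1 + m / 2 = m := by
      rw [Nat.not_even_iff_odd] at he; obtain ⟨r, rfl⟩ := he; omega
    rw [h4] at h3
    exact hu a b hab m hm h3

lemma rightDescent_unique (hu : IsUniversal cs) {w : W} {i j : B}
    (hi : cs.length (w * cs.simple i) < cs.length w)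
    (hj : cs.length (w * cs.simple j) < cs.length w) : cs.simple i = cs.simple j := by
  by_contra hne
  have hdesc : ∀ a : B, (a = i ∨ a = j) → cs.length (w * cs.simple a) < cs.length w := by
    rintro a (rfl | rfl) <;> assumption
  have key : ∀ k : ℕ, ∃ (μ : List B) (a b : B),
      ((a = i ∧ b = j) ∨ (a = j ∧ b = i)) ∧
      cs.IsReduced (μ ++ CoxeterSystem.alternatingWord a b (k+1)) ∧
      cs.wordProd (μ ++ CoxeterSystem.alternatingWord a b (k+1)) = w := by
    intro k
    induction k with
    | zero =>
      obtain ⟨τ, hτred, hτ⟩ := cs.exists_reduced_word' (w * cs.simple i)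
      have halt : CoxeterSystem.alternatingWord j i 1 = [i] := rfl
      have hπ : cs.wordProd (τ ++ [i]) = w := by
        rw [cs.wordProd_append, cs.wordProd_singleton, ← hτ, mul_assoc,
          cs.simple_mul_simple_self, mul_one]
      have hlen : cs.length (w * cs.simple i) + 1 = cs.length w := by
        rcases cs.length_mul_simple w i with h | h
        · omega
        · exact h
      refine ⟨τ, j, i, Or.inr ⟨rfl, rfl⟩, ?_, ?_⟩
      · rw [halt]
        show cs.length (cs.wordProd (τ ++ [i])) = _
        rw [hπ]
        have : cs.length (cs.wordProd τ) = τ.length := hτred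
        rw [← hτ] at this
        simp only [List.length_append, List.length_singleton]
        omega
      · rw [halt]; exact hπ
    | succ k ih =>
      obtain ⟨μ, a, b, hab, hred, hπ⟩ := ih
      have hsab : cs.simple a ≠ cs.simple b := by
        rcases hab with ⟨rfl, rfl⟩ | ⟨rfl, rfl⟩
        · exact hne
        · exact fun h => hne h.symm
      have hadesc : cs.length (w * cs.simple a) < cs.length w := by
        apply hdesc a
        rcases hab with ⟨rfl, _⟩ | ⟨rfl, _⟩ <;> tauto
      have hlenw : cs.length (w * cs.simple a) + 1 = cs.length w := by
        rcases cs.length_mul_simple w a with h | h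
        · omega
        · exact h
      obtain ⟨j₀, hj₀, herase⟩ := exchange cs hu hadesc hred hπ
      set κ := CoxeterSystem.alternatingWord a b (k+1) with hκ
      have hκlen : κ.length = k + 1 := by simp [hκ]
      have hwlen : cs.length w = μ.length + (k+1) := by
        have : cs.length (cs.wordProd (μ ++ κ)) = (μ ++ κ).length := hred
        rw [hπ] at this
        simpa [hκlen] using this
      rcases Nat.lt_or_ge j₀ μ.length with hcase | hcase
      · -- erase inside μ : extend the alternating block
        rw [List.eraseIdx_append_of_lt_length hcase] at herase
        have haltsucc : CoxeterSystem.alternatingWord b a (k+1+1) = κ ++ [a] := by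
          rw [CoxeterSystem.alternatingWord_succ, List.concat_eq_append]
        have hπ' : cs.wordProd (μ.eraseIdx j₀ ++ CoxeterSystem.alternatingWord b a (k+1+1)) = w := by
          rw [haltsucc, ← List.append_assoc, cs.wordProd_append, ← herase,
            cs.wordProd_singleton, mul_assoc, cs.simple_mul_simple_self, mul_one]
        refine ⟨μ.eraseIdx j₀, b, a, by tauto, ?_, hπ'⟩
        show cs.length (cs.wordProd _) = _
        rw [hπ']
        simp only [List.length_append, List.length_eraseIdx, if_pos hcase,
          haltsucc, List.length_singleton, hκlen]
        omega
      · -- erase inside the block : contradiction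
        exfalso
        rw [List.eraseIdx_append_of_length_le hcase] at herase
        set p := j₀ - μ.length with hp
        have hplt : p < k + 1 := by
          have h9 := hj₀
          simp only [List.length_append, hκlen] at h9
          omega
        rcases Nat.lt_or_ge p k with hpk | hpk
        · rcases Nat.eq_zero_or_pos p with hp0 | hp0
          · -- p = 0 : dihedral contradiction
            have hk1 : 1 ≤ k := by omega
            rw [hp0] at herase
            have he0 : κ.eraseIdx 0 = CoxeterSystem.alternatingWord a b k := by
              rw [hκ, CoxeterSystem.alternatingWord_succ' a b k]
              rfl
            rw [he0] at herase
            have hsplit : w = cs.wordProd μ * (cs.simple (if Even k then b else a)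
                  * cs.wordProd (CoxeterSystem.alternatingWord a b k)) := by
              rw [← hπ, cs.wordProd_append, hκ, CoxeterSystem.alternatingWord_succ' a b k,
                cs.wordProd_cons]
            rw [cs.wordProd_append] at herase
            have h6 : cs.wordProd μ * ((cs.simple (if Even k then b else a)
                  * cs.wordProd (CoxeterSystem.alternatingWord a b k)) * cs.simple a)
                = cs.wordProd μ * cs.wordProd (CoxeterSystem.alternatingWord a b k) := by
              rw [← mul_assoc, ← hsplit]
              exact herase
            have h7 := mul_left_cancel h6
            have heq : cs.simple (if Even k then b else a)
                * cs.wordProd (CoxeterSystem.alternatingWord a b k) =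
                cs.wordProd (CoxeterSystem.alternatingWord a b k) * cs.simple a := by
              have h8 := congrArg (fun z => z * cs.simple a) h7
              simpa [mul_assoc, cs.simple_mul_simple_self] using h8
            have hL : cs.simple (if Even k then b else a)
                * cs.wordProd (CoxeterSystem.alternatingWord a b k)
                = cs.wordProd (CoxeterSystem.alternatingWord a b (k+1)) := by
              rw [CoxeterSystem.alternatingWord_succ' a b k, cs.wordProd_cons]
            have hR : cs.wordProd (CoxeterSystem.alternatingWord a b k) * cs.simple a
                = cs.wordProd (CoxeterSystem.alternatingWord b a (k+1)) := by
              rw [CoxeterSystem.alternatingWord_succ b a k, cs.wordProd_concat]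
            exact alt_prod_ne cs hu hsab (m := k+1) (by omega) (by rw [← hL, ← hR]; exact heq)
          · -- 0 < p < k : adjacent equal letters
            have hg1 := alternatingWord_getElem? a b (k+1) (p-1) (by omega)
            have hg2 := alternatingWord_getElem? a b (k+1) (p+1) (by omega)
            have hpareq : (if Even (k+1-(p-1)) then a else b) = (if Even (k+1-(p+1)) then a else b) := by
              have hpar : (k + 1 - (p-1)) = (k + 1 - (p+1)) + 2 := by omega
              rw [hpar]
              by_cases he : Even (k+1-(p+1)) <;> simp [he, parity_simps]
            set x := if Even (k+1-(p+1)) then a else b with hx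
            have hg1' : κ[p-1]? = some x := by rw [hκ, hg1, hpareq]
            have hg2' : κ[p+1]? = some x := by rw [hκ, hg2]
            have hp1κ : p - 1 < κ.length := by omega
            have hp2κ : p + 1 < κ.length := by omega
            have htake : κ.take p = κ.take (p-1) ++ [x] := by
              have hps : p = (p - 1) + 1 := by omega
              rw [hps, List.take_succ, ← hps, hg1']
              rfl
            have hdrop : κ.drop (p+1) = x :: κ.drop (p+2) := by
              rw [List.drop_eq_getElem_cons hp2κ]
              congr 1
              have := List.getElem?_eq_getElem hp2κ
              rw [this] at hg2'
              exact Option.some.inj hg2'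
            have herase2 : κ.eraseIdx p = κ.take (p-1) ++ x :: x :: κ.drop (p+2) := by
              rw [List.eraseIdx_eq_take_drop_succ, htake, hdrop]
              simp
            rw [herase2] at herase
            have hlist : μ ++ (κ.take (p-1) ++ x :: x :: κ.drop (p+2))
                = (μ ++ κ.take (p-1)) ++ x :: x :: κ.drop (p+2) := by simp
            rw [hlist, wordProd_adjacent cs _ _ rfl] at herase
            have hbound := cs.length_wordProd_le ((μ ++ κ.take (p-1)) ++ κ.drop (p+2))
            rw [← herase] at hbound
            simp only [List.length_append, List.length_take, List.length_drop, hκlen] at hbound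
            omega
        · -- p = k : last letter, s a = s b
          have hpk' : p = k := by omega
          rw [hpk'] at herase
          have haltc : κ = CoxeterSystem.alternatingWord b a k ++ [b] := by
            rw [hκ, CoxeterSystem.alternatingWord_succ, List.concat_eq_append]
          have herasek : κ.eraseIdx k = CoxeterSystem.alternatingWord b a k := by
            rw [List.eraseIdx_eq_take_drop_succ, haltc]
            rw [List.take_append_of_le_length (by simp), List.drop_eq_nil_of_le (by simp)]
            simp
          rw [herasek] at herase
          have hrhs : cs.wordProd (μ ++ CoxeterSystem.alternatingWord b a k)
              = w * cs.simple b := by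
            have hw2 : w = cs.wordProd (μ ++ CoxeterSystem.alternatingWord b a k)
                * cs.simple b := by
              rw [← hπ, haltc, ← List.append_assoc, cs.wordProd_append, cs.wordProd_singleton]
            rw [hw2, mul_assoc, cs.simple_mul_simple_self, mul_one]
          rw [hrhs] at herase
          exact hsab (mul_left_cancel herase)
  obtain ⟨μ, a, b, _, hred, hπ⟩ := key (cs.length w)
  have h1 : cs.length w = μ.length + (cs.length w + 1) := by
    have : cs.length (cs.wordProd (μ ++ CoxeterSystem.alternatingWord a b (cs.length w + 1))) =
        (μ ++ CoxeterSystem.alternatingWord a b (cs.length w + 1)).length := hred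
    rw [hπ] at this
    simpa using this
  omega

lemma leftDescent_unique (hu : IsUniversal cs) {w : W} {i j : B}
    (hi : cs.length (cs.simple i * w) < cs.length w)
    (hj : cs.length (cs.simple j * w) < cs.length w) : cs.simple i = cs.simple j := by
  apply rightDescent_unique cs hu (w := w⁻¹)
  · have : cs.length (w⁻¹ * cs.simple i) = cs.length (cs.simple i * w) := by
      rw [← cs.length_inv (w⁻¹ * cs.simple i)]
      simp [mul_inv_rev]
    rw [this, cs.length_inv]
    exact hi
  · have : cs.length (w⁻¹ * cs.simple j) = cs.length (cs.simple j * w) := by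
      rw [← cs.length_inv (w⁻¹ * cs.simple j)]
      simp [mul_inv_rev]
    rw [this, cs.length_inv]
    exact hj


end Part2
section Part3

variable {B : Type} {W : Type} [Group W] {M : CoxeterMatrix B} {cs : CoxeterSystem M W}

/-- An index-level version of the `*` operation. -/
def stF (cs : CoxeterSystem M W) (σ : StarInv cs) : B → B := fun b =>
  if σ.star (cs.simple b) = cs.simple b then b else Classical.choose (σ.star_simple b)

lemma stF_spec (σ : StarInv cs) (b : B) :
    cs.simple (stF cs σ b) = σ.star (cs.simple b) := by
  unfold stF
  split_ifs with h
  · exact h.symm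
  · exact (Classical.choose_spec (σ.star_simple b)).symm

lemma stF_eq_self_iff (σ : StarInv cs) (b : B) :
    stF cs σ b = b ↔ σ.star (cs.simple b) = cs.simple b := by
  constructor
  · intro h
    have h2 := stF_spec σ b
    rw [h] at h2
    exact h2.symm
  · intro h; unfold stF; rw [if_pos h]

lemma star_inj (σ : StarInv cs) {u v : W} (h : σ.star u = σ.star v) : u = v := by
  have h2 := congrArg σ.star h
  rwa [σ.invol, σ.invol] at h2

lemma twistWord_cons (σ : StarInv cs) (b : B) (ω : List B) (u : W) :
    twistWord cs σ (b :: ω) u = σ.tw (cs.simple b) (twistWord cs σ ω u) := rfl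

lemma twistWord_concat (σ : StarInv cs) (ω : List B) (i : B) (u : W) :
    twistWord cs σ (ω ++ [i]) u = twistWord cs σ ω (σ.tw (cs.simple i) u) := by
  unfold twistWord
  rw [List.foldr_append]
  rfl

lemma tw_one_fixed (σ : StarInv cs) {i : B} (hsi : σ.star (cs.simple i) = cs.simple i) :
    σ.tw (cs.simple i) 1 = cs.simple i := by
  unfold StarInv.tw
  rw [if_pos (by rw [hsi, mul_one, one_mul]), mul_one]

/-- The canonical reduced word for `s_{b_1} ⋯ s_{b_n} s_i s_{b_n}^* ⋯ s_{b_1}^*`. -/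
def omegaW (cs : CoxeterSystem M W) (σ : StarInv cs) (ω : List B) (i : B) : List B :=
  ω ++ i :: (ω.map (stF cs σ)).reverse

lemma omegaW_length (σ : StarInv cs) (ω : List B) (i : B) :
    (omegaW cs σ ω i).length = 2 * ω.length + 1 := by
  simp [omegaW]
  omega

lemma keyA (hu : IsUniversal cs) (σ : StarInv cs) {i : B}
    (hsi : σ.star (cs.simple i) = cs.simple i) :
    ∀ ω : List B, cs.IsReduced (ω ++ [i]) →
      twistWord cs σ (ω ++ [i]) 1 = cs.wordProd (omegaW cs σ ω i) ∧
      cs.IsReduced (omegaW cs σ ω i) := by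
  intro ω
  induction ω with
  | nil =>
    intro _
    constructor
    · show twistWord cs σ ([] ++ [i]) 1 = cs.wordProd [i]
      rw [(by simp : ([] : List B) ++ [i] = [i]), twistWord_cons]
      show σ.tw (cs.simple i) (twistWord cs σ [] 1) = _
      show σ.tw (cs.simple i) 1 = _
      rw [tw_one_fixed σ hsi, cs.wordProd_singleton]
    · show cs.length (cs.wordProd [i]) = _
      rw [cs.wordProd_singleton, cs.length_simple]
      rfl
  | cons b ω₁ ih =>
    intro hred
    have hredc : cs.IsReduced (b :: (ω₁ ++ [i])) := by simpa using hred
    have hred₁ : cs.IsReduced (ω₁ ++ [i]) := by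
      have h2 := CoxeterSystem.IsReduced.drop (ω := b :: (ω₁ ++ [i])) hredc 1
      simpa using h2
    obtain ⟨hW₁, hΩ₁red⟩ := ih hred₁
    set W₁ := twistWord cs σ (ω₁ ++ [i]) 1 with hW₁def
    set Ω₁ := omegaW cs σ ω₁ i with hΩ₁def
    clear_value W₁ Ω₁
    have hℓW₁ : cs.length W₁ = 2 * ω₁.length + 1 := by
      rw [hW₁]
      have h9 := hΩ₁red
      unfold CoxeterSystem.IsReduced at h9
      rw [h9, hΩ₁def, omegaW_length]
    -- head of ω₁ ++ [i]
    obtain ⟨h₀, t₁, ht₁⟩ : ∃ h₀ t₁, ω₁ ++ [i] = h₀ :: t₁ := by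
      cases ω₁ with
      | nil => exact ⟨i, [], rfl⟩
      | cons c ρ => exact ⟨c, ρ ++ [i], rfl⟩
    have hΩ₁cons : Ω₁ = h₀ :: (t₁ ++ (ω₁.map (stF cs σ)).reverse) := by
      rw [hΩ₁def]
      unfold omegaW
      rw [List.append_cons ω₁ i, ht₁]
      simp
    -- (i) s b ≠ s h₀
    have hbh : cs.simple b ≠ cs.simple h₀ := by
      apply reduced_adjacent_ne cs (ρ₁ := []) (ρ₂ := t₁)
      rw [ht₁] at hredc
      simpa using hredc
    -- head descent of W₁
    have hHead : cs.length (cs.simple h₀ * W₁) < cs.length W₁ := by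
      have h2 := isLeftDescent_head cs (μ := t₁ ++ (ω₁.map (stF cs σ)).reverse) (e := h₀)
        (by rw [← hΩ₁cons]; exact hΩ₁red)
      rw [← hΩ₁cons, ← hW₁] at h2
      exact h2
    -- (iii) ℓ(s b * W₁) = ℓ W₁ + 1
    have hup : cs.length (cs.simple b * W₁) = cs.length W₁ + 1 := by
      rcases cs.length_simple_mul W₁ b with h | h
      · exact h
      · exfalso
        exact hbh (leftDescent_unique cs hu (by omega) hHead)
    -- (iv) noncommuting
    have hne : cs.simple b * W₁ ≠ W₁ * σ.star (cs.simple b) := by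
      intro heq
      have hd1 : cs.length (cs.simple b * (cs.simple b * W₁)) < cs.length (cs.simple b * W₁) := by
        rw [cs.simple_mul_simple_cancel_left]
        omega
      have hd2 : cs.length (cs.simple h₀ * (cs.simple b * W₁)) < cs.length (cs.simple b * W₁) := by
        rw [heq, ← mul_assoc]
        calc cs.length (cs.simple h₀ * W₁ * σ.star (cs.simple b))
            ≤ cs.length (cs.simple h₀ * W₁) + cs.length (σ.star (cs.simple b)) :=
              cs.length_mul_le _ _
        _ = cs.length (cs.simple h₀ * W₁) + 1 := by rw [← stF_spec σ b, cs.length_simple]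
        _ < cs.length W₁ + 1 := by omega
        _ = cs.length (W₁ * σ.star (cs.simple b)) := by rw [← heq, hup]
      exact hbh (leftDescent_unique cs hu hd1 hd2)
    -- (v) full conjugation adds 2
    have hlen2 : cs.length (cs.simple b * W₁ * σ.star (cs.simple b)) = cs.length W₁ + 2 := by
      rw [← stF_spec σ b]
      rcases cs.length_mul_simple (cs.simple b * W₁) (stF cs σ b) with h | h
      · omega
      · exfalso
        -- s (stF b) is a right descent of u := s b * W₁
        have hd1 : cs.length (cs.simple b * W₁ * cs.simple (stF cs σ b))
            < cs.length (cs.simple b * W₁) := by omega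
        -- the last letter of b :: Ω₁ is also a right descent
        cases ω₁ with
        | nil =>
          -- Ω₁ = [i], u = s b * s i, word [b, i]
          have hW₁si : W₁ = cs.simple i := by
            rw [hW₁, hΩ₁def]
            unfold omegaW
            simp
          have hired : cs.IsReduced ([b] ++ [i]) := by
            show cs.length (cs.wordProd ([b] ++ [i])) = _
            rw [cs.wordProd_append, cs.wordProd_singleton, cs.wordProd_singleton, ← hW₁si]
            rw [hup, hℓW₁]
            simp
          have hd2 : cs.length ((cs.simple b * W₁) * cs.simple i) < cs.length (cs.simple b * W₁) := by
            have h3 := isRightDescent_last cs hired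
            rw [cs.wordProd_append, cs.wordProd_singleton, cs.wordProd_singleton] at h3
            rw [hW₁si]
            exact h3
          have hee := rightDescent_unique cs hu hd1 hd2
          -- s (stF b) = s i  ⇒  s b = s i,  but h₀ = i
          have hbi : cs.simple b = cs.simple i := by
            apply star_inj σ
            rw [← stF_spec σ b, hee, hsi]
          have hh₀ : h₀ = i := by
            cases ht₁  -- [] ++ [i] = h₀ :: t₁ means h₀ = i
            rfl
          rw [hh₀] at hbh
          exact hbh hbi
        | cons c ρ =>
          have hdecomp : b :: Ω₁
              = (b :: c :: (ρ ++ i :: (ρ.map (stF cs σ)).reverse)) ++ [stF cs σ c] := by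
            rw [hΩ₁def]
            unfold omegaW
            simp
          have hured : cs.IsReduced (b :: Ω₁) := by
            show cs.length (cs.wordProd (b :: Ω₁)) = _
            rw [cs.wordProd_cons, ← hW₁, hup, hℓW₁]
            simp only [hΩ₁def, List.length_cons, omegaW_length]
          have hd2 : cs.length ((cs.simple b * W₁) * cs.simple (stF cs σ c))
              < cs.length (cs.simple b * W₁) := by
            have hured' : cs.IsReduced
                ((b :: c :: (ρ ++ i :: (ρ.map (stF cs σ)).reverse)) ++ [stF cs σ c]) := by
              rw [← hdecomp]; exact hured
            have h3 := isRightDescent_last cs hured'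
            rw [← hdecomp, cs.wordProd_cons, ← hW₁] at h3
            exact h3
          have hee := rightDescent_unique cs hu hd1 hd2
          have hbc : cs.simple b = cs.simple c := by
            apply star_inj σ
            rw [← stF_spec σ b, ← stF_spec σ c, hee]
          have hh₀ : h₀ = c := by
            have : (c :: ρ) ++ [i] = c :: (ρ ++ [i]) := by simp
            rw [this] at ht₁
            exact (List.cons.injEq _ _ _ _ ▸ ht₁).1.symm
          rw [hh₀] at hbh
          exact hbh hbc
    -- conclusion
    have htw : twistWord cs σ ((b :: ω₁) ++ [i]) 1 = cs.simple b * W₁ * σ.star (cs.simple b) := by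
      rw [(by simp : (b :: ω₁) ++ [i] = b :: (ω₁ ++ [i])), twistWord_cons, ← hW₁def]
      unfold StarInv.tw
      rw [if_neg hne]
    have hΩeq : omegaW cs σ (b :: ω₁) i = b :: (Ω₁ ++ [stF cs σ b]) := by
      rw [hΩ₁def]
      unfold omegaW
      simp
    have hπΩ : cs.wordProd (omegaW cs σ (b :: ω₁) i) = cs.simple b * W₁ * σ.star (cs.simple b) := by
      rw [hΩeq, cs.wordProd_cons, cs.wordProd_append, cs.wordProd_singleton, ← hW₁,
        stF_spec σ b, mul_assoc]
    constructor
    · rw [htw, hπΩ]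
    · show cs.length (cs.wordProd (omegaW cs σ (b :: ω₁) i)) = _
      rw [hπΩ, hlen2, hℓW₁, omegaW_length]
      simp
      omega

lemma twistWord_length_le (σ : StarInv cs) :
    ∀ ρ : List B, cs.length (twistWord cs σ ρ 1) ≤ 2 * ρ.length := by
  intro ρ
  induction ρ with
  | nil =>
    show cs.length 1 ≤ 0
    simp
  | cons b ρ ih =>
    rw [twistWord_cons]
    unfold StarInv.tw
    split_ifs with h
    · calc cs.length (cs.simple b * twistWord cs σ ρ 1)
          ≤ cs.length (cs.simple b) + cs.length (twistWord cs σ ρ 1) := cs.length_mul_le _ _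
      _ = 1 + cs.length (twistWord cs σ ρ 1) := by rw [cs.length_simple]
      _ ≤ 2 * (b :: ρ).length := by simp; omega
    · calc cs.length (cs.simple b * twistWord cs σ ρ 1 * σ.star (cs.simple b))
          ≤ cs.length (cs.simple b * twistWord cs σ ρ 1) + cs.length (σ.star (cs.simple b)) :=
            cs.length_mul_le _ _
      _ ≤ cs.length (cs.simple b) + cs.length (twistWord cs σ ρ 1) + 1 := by
          rw [← stF_spec σ b, cs.length_simple]
          have := cs.length_mul_le (cs.simple b) (twistWord cs σ ρ 1)
          omega
      _ ≤ 2 * (b :: ρ).length := by rw [cs.length_simple]; simp; omega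

lemma isTwistReduced_of_length (σ : StarInv cs) {ν : List B}
    (h : 2 * ν.length ≤ cs.length (twistWord cs σ ν 1) + 1) :
    IsTwistReduced cs σ ν := by
  intro ω' he
  have h1 := twistWord_length_le σ ω'
  rw [he] at h1
  omega

end Part3

section Part5

variable {B : Type} {W : Type} [Group W] {M : CoxeterMatrix B} {cs : CoxeterSystem M W}

lemma omegaW_nil (σ : StarInv cs) (i : B) : omegaW cs σ [] i = [i] := rfl

lemma omegaW_concat (σ : StarInv cs) (ω' : List B) (b i : B) :
    omegaW cs σ (ω' ++ [b]) i
      = (ω' ++ [b]) ++ i :: stF cs σ b :: (ω'.map (stF cs σ)).reverse := by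
  unfold omegaW
  simp

lemma omegaW_getElem_mid (σ : StarInv cs) (ω' : List B) (b i : B) :
    (omegaW cs σ (ω' ++ [b]) i)[ω'.length]? = some b := by
  rw [omegaW_concat]
  rw [List.getElem?_append_left (by simp)]
  rw [List.getElem?_append_right (by simp)]
  simp

lemma omegaW_getElem_mid2 (σ : StarInv cs) (ω' : List B) (b i : B) :
    (omegaW cs σ (ω' ++ [b]) i)[ω'.length + 2]? = some (stF cs σ b) := by
  rw [omegaW_concat]
  rw [List.getElem?_append_right (by simp)]
  have h1 : ω'.length + 2 - (ω' ++ [b]).length = 1 := by simp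
  rw [h1]
  simp

lemma omegaW_take_drop (σ : StarInv cs) (ω' : List B) (b i : B) :
    (omegaW cs σ (ω' ++ [b]) i).take (ω'.length + 1)
      ++ (omegaW cs σ (ω' ++ [b]) i).drop (ω'.length + 3) = omegaW cs σ ω' b := by
  rw [omegaW_concat]
  have h1 : ((omegaW cs σ (ω' ++ [b]) i) : List B).length = 2 * (ω' ++ [b]).length + 1 :=
    omegaW_length σ _ i
  rw [List.take_left' (by simp)]
  have h2 : (ω' ++ [b]) ++ i :: stF cs σ b :: (ω'.map (stF cs σ)).reverse
      = ((ω' ++ [b]) ++ [i, stF cs σ b]) ++ (ω'.map (stF cs σ)).reverse := by simp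
  rw [h2, List.drop_left' (by simp)]
  unfold omegaW
  simp

end Part5
/-- in a universal Coxeter system, if `s ∈ S ∩ I_*` and `s ∉ Des_R(x)`, then
`c(x⋉s, n+1) = Φ(A(x⋉s, n+1))` where `n = ℓ(x)` and `Φ : M_{q²} → ℋ_q` is the `𝒜`-linear
map with `Φ(A_w) = c_w`.  Here `c(·,·)` and `A(·,·)` are the recursively defined elements,
passed as functions characterized by their recursions on reduced expressions. -/
theorem statement_19 (cs : CoxeterSystem M W) (hu : IsUniversal cs) (σ : StarInv cs)
    (KD : KLData cs) (K2 : HeckeBar cs (qq ^ 2)) (D : TKLData cs σ K2)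
    (cc : W → ℕ → KD.carrier)
    (hcca : ∀ (ω : List B) (j : ℕ), cs.IsReduced ω → 2 ≤ j → j + 1 ≤ ω.length →
        ω[j - 2]? = ω[j]? →
        cc (cs.wordProd ω) j =
          KD.c (cs.wordProd (ω.take (j - 1) ++ ω.drop (j + 1))) +
          cc (cs.wordProd (ω.take (j - 1) ++ ω.drop (j + 1))) (j - 1))
    (hcc0 : ∀ (ω : List B) (j : ℕ), cs.IsReduced ω →
        ¬ (2 ≤ j ∧ j + 1 ≤ ω.length ∧ ω[j - 2]? = ω[j]?) →
        cc (cs.wordProd ω) j = 0)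
    (AB : W → ℕ → D.Mod)
    (hABa : ∀ (ω : List B) (j : ℕ), IsTwistReduced cs σ ω → 2 ≤ j → j + 1 ≤ ω.length →
        ω[j - 2]? = ω[j]? →
        AB (twistWord cs σ ω 1) j =
          D.A ⟨twistWord cs σ (ω.take (j - 1) ++ ω.drop (j + 1)) 1,
            twistWord_mem σ _ σ.one_mem⟩ +
          AB (twistWord cs σ (ω.take (j - 1) ++ ω.drop (j + 1)) 1) (j - 1))
    (hABb : ∀ (ω : List B) (i' i'' : B), IsTwistReduced cs σ (ω ++ [i', i'']) →
        σ.star (cs.simple i') = cs.simple i' → σ.star (cs.simple i'') = cs.simple i'' →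
        AB (twistWord cs σ (ω ++ [i', i'']) 1) (ω.length + 2) =
          D.A ⟨twistWord cs σ (ω ++ [i']) 1, twistWord_mem σ _ σ.one_mem⟩ +
          AB (twistWord cs σ (ω ++ [i']) 1) (ω.length + 1))
    (hAB0 : ∀ (ω : List B) (j : ℕ), IsTwistReduced cs σ ω →
        ¬ (2 ≤ j ∧ j + 1 ≤ ω.length ∧ ω[j - 2]? = ω[j]?) →
        ¬ (j = ω.length ∧ 2 ≤ ω.length ∧
            ∀ b ∈ ω.drop (ω.length - 2), σ.star (cs.simple b) = cs.simple b) →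
        AB (twistWord cs σ ω 1) j = 0)
    (i : B) (hsi : σ.star (cs.simple i) = cs.simple i)
    (x : W) (hx : ¬ cs.length (x * cs.simple i) < cs.length x) :
    ∀ Φ : D.Mod →ₗ[A𝕃] KD.carrier,
      (∀ w : σ.I, Φ (D.A w) = KD.c (w : W)) →
      cc (twAct cs σ x (cs.simple i)) (cs.length x + 1) =
        Φ (AB (twAct cs σ x (cs.simple i)) (cs.length x + 1)) := by

  intro Φ hΦ
  -- The main induction, for arbitrary reduced words.
  have main : ∀ n : ℕ, ∀ (ω : List B) (i' : B), ω.length = n →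
      cs.IsReduced (ω ++ [i']) → σ.star (cs.simple i') = cs.simple i' →
      cc (twistWord cs σ (ω ++ [i']) 1) (n + 1)
        = Φ (AB (twistWord cs σ (ω ++ [i']) 1) (n + 1)) := by
    intro n
    induction n using Nat.strong_induction_on with
    | _ n IH =>
      intro ω i' hlen hred hfix
      obtain ⟨htw, hΩred⟩ := keyA hu σ hfix ω hred
      have hlenW : cs.length (twistWord cs σ (ω ++ [i']) 1) = 2 * n + 1 := by
        rw [htw]
        have h9 : cs.length (cs.wordProd (omegaW cs σ ω i')) = (omegaW cs σ ω i').length := hΩred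
        rw [h9, omegaW_length, hlen]
      have hTR : IsTwistReduced cs σ (ω ++ [i']) := by
        apply isTwistReduced_of_length σ
        rw [hlenW]
        simp only [List.length_append, List.length_singleton, hlen]
        omega
      match n, hlen with
      | 0, hlen =>
        -- base case : ω = []
        have hω : ω = [] := List.length_eq_zero_iff.mp hlen
        subst hω
        have hred1 : cs.IsReduced [i'] := by simpa using hred
        have hc0 : cc (cs.wordProd [i']) 1 = 0 := by
          apply hcc0 [i'] 1 hred1
          rintro ⟨h2, -, -⟩
          omega
        have hA0 : AB (twistWord cs σ [i'] 1) 1 = 0 := by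
          apply hAB0 [i'] 1 (by simpa using hTR)
          · rintro ⟨h2, -, -⟩
            omega
          · rintro ⟨-, h2, -⟩
            simp at h2
        have hnil : ([] : List B) ++ [i'] = [i'] := rfl
        rw [hnil, hA0, map_zero]
        rw [hnil, omegaW_nil] at htw
        rw [htw, hc0]
      | (m + 1), hlen =>
        -- inductive step : ω = ω' ++ [b]
        rcases List.eq_nil_or_concat ω with rfl | ⟨ω', b, rfl⟩
        · simp at hlen
        rw [List.concat_eq_append] at *
        have hlen' : ω'.length = m := by simpa using hlen
        have hredb : cs.IsReduced (ω' ++ [b]) := by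
          have h9 := CoxeterSystem.IsReduced.take (ω := (ω' ++ [b]) ++ [i']) hred (m + 1)
          rwa [List.take_left' (by simpa using hlen)] at h9
        have hlist2 : ω' ++ [b, i'] = (ω' ++ [b]) ++ [i'] := by simp
        by_cases hb : σ.star (cs.simple b) = cs.simple b
        · -- the star-fixed case
          have hstb : stF cs σ b = b := (stF_eq_self_iff σ b).mpr hb
          obtain ⟨htw', hΩ'red⟩ := keyA hu σ hb ω' hredb
          -- Kazhdan-Lusztig side
          have hccstep := hcca (omegaW cs σ (ω' ++ [b]) i') (m + 2) hΩred (by omega)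
            (by rw [omegaW_length]; simp; omega)
            (by
              rw [(by omega : m + 2 - 2 = m), ← hlen', omegaW_getElem_mid σ ω' b i',
                omegaW_getElem_mid2 σ ω' b i', hstb])
          rw [(by omega : m + 2 - 1 = m + 1), (by omega : m + 2 + 1 = m + 3), ← hlen',
            omegaW_take_drop σ ω' b i', ← htw'] at hccstep
          rw [hlen'] at hccstep
          -- Lusztig-Vogan side
          have hABstep := hABb ω' b i' (by rw [hlist2]; exact hTR) hb hfix
          rw [hlist2, hlen'] at hABstep
          -- induction hypothesis
          have hIH := IH m (by omega) ω' b hlen' hredb hb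
          rw [show m + 1 + 1 = m + 2 from rfl, hABstep, htw, hccstep, map_add, hIH]
          congr 1
          exact (hΦ ⟨twistWord cs σ (ω' ++ [b]) 1, twistWord_mem σ _ σ.one_mem⟩).symm
        · -- the non-star-fixed case : both sides vanish
          have hstb : stF cs σ b ≠ b := fun h => hb ((stF_eq_self_iff σ b).mp h)
          have hc0 : cc (cs.wordProd (omegaW cs σ (ω' ++ [b]) i')) (m + 2) = 0 := by
            apply hcc0 _ _ hΩred
            rintro ⟨-, -, h3⟩
            rw [(by omega : m + 2 - 2 = m), ← hlen', omegaW_getElem_mid σ ω' b i',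
              omegaW_getElem_mid2 σ ω' b i'] at h3
            exact hstb (Option.some.inj h3).symm
          have hA0 : AB (twistWord cs σ ((ω' ++ [b]) ++ [i']) 1) (m + 2) = 0 := by
            apply hAB0 _ _ hTR
            · rintro ⟨-, h3, -⟩
              simp at h3
              omega
            · rintro ⟨-, -, h3⟩
              apply hb
              apply h3 b
              have h4 : ((ω' ++ [b]) ++ [i']).length - 2 = ω'.length := by simp
              rw [h4, ← hlist2, List.drop_left' rfl]
              simp
          rw [show m + 1 + 1 = m + 2 from rfl, hA0, map_zero, htw, hc0]
  -- Apply the main lemma to the chosen reduced word of `x`.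
  obtain ⟨hxred, hxeq⟩ := Classical.choose_spec (cs.exists_reduced_word' x)
  set ωx := Classical.choose (cs.exists_reduced_word' x) with hωx
  have hxlen : cs.length x = ωx.length := by rw [hxeq]; exact hxred
  have hredxi : cs.IsReduced (ωx ++ [i]) := by
    show cs.length (cs.wordProd (ωx ++ [i])) = _
    rw [cs.wordProd_append, cs.wordProd_singleton, ← hxeq]
    have h1 : cs.length (x * cs.simple i) = cs.length x + 1 := by
      rcases cs.length_mul_simple x i with h | h
      · exact h
      · omega
    rw [h1, hxlen]
    simp
  have hta : twAct cs σ x (cs.simple i) = twistWord cs σ (ωx ++ [i]) 1 := by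
    unfold twAct
    rw [twistWord_concat, tw_one_fixed σ hsi]
  rw [hta, hxlen]
  exact main ωx.length ωx i rfl hredxi hsi


end TwistedKL
end
end
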